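/- arXiv:2112.14525 — 10 statements merged into one kernel-verified Lean document; each statement's English description precedes it below -/
import Mathlib

section
/- Let (a_n) be a sequence in (0,1), and let (r_n), (v_n) be sequences of real numbers such that (i) ∑_{n≥0} a_n = ∞, (ii) limsup r_n ≤ 0, and (iii) (v_n) is nonnegative with ∑_{n≥0} v_n < ∞. If (s_n) is a sequence of nonnegative real numbers satisfying s_{n+1} ≤ (1 − a_n)·s_n + a_n·r_n + v_n for all n ∈ ℕ, then lim s_n = 0. -/
open Filter Finset

/-- Xu's lemma: if `∑ aₙ = ∞`, `limsup rₙ ≤ 0` (expressed in its ε-form) and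
`∑ vₙ < ∞` with `vₙ ≥ 0`, then any nonnegative sequence `sₙ` satisfying
`s_{n+1} ≤ (1 - aₙ) sₙ + aₙ rₙ + vₙ` tends to `0`. -/
theorem stmt0 (a r v s : ℕ → ℝ)
    (ha : ∀ n, a n ∈ Set.Ioo (0 : ℝ) 1)
    (hdiv : Filter.Tendsto (fun n => ∑ i ∈ Finset.range n, a i) Filter.atTop Filter.atTop)
    (hlimsup : ∀ ε : ℝ, 0 < ε → ∃ N, ∀ n ≥ N, r n ≤ ε)
    (hv0 : ∀ n, 0 ≤ v n)
    (hvsum : Summable v)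
    (hs0 : ∀ n, 0 ≤ s n)
    (hrec : ∀ n, s (n + 1) ≤ (1 - a n) * s n + a n * r n + v n) :
    Filter.Tendsto s Filter.atTop (nhds 0) := by
  have key : ∀ ε : ℝ, 0 < ε → ∀ᶠ n in atTop, s n ≤ ε := by
    intro ε hε
    obtain ⟨N₁, hN₁⟩ := hlimsup (ε / 3) (by linarith)
    have hvtail : Tendsto (fun i => ∑' k, v (k + i)) atTop (nhds 0) :=
      tendsto_sum_nat_add v
    obtain ⟨N₂, hN₂⟩ := eventually_atTop.1 (hvtail.eventually_lt_const (by linarith : (0:ℝ) < ε/3))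
    set N := max N₁ N₂ with hN
    have hvN : ∑' k, v (k + N) < ε / 3 := hN₂ N (le_max_right _ _)
    have hvsumN : Summable fun k => v (k + N) := (summable_nat_add_iff N).2 hvsum
    -- partial tail sums bounded
    have hT : ∀ k, ∑ i ∈ range k, v (N + i) ≤ ε / 3 := by
      intro k
      have h1 : ∑ i ∈ range k, v (N + i) = ∑ i ∈ range k, v (i + N) := by
        apply Finset.sum_congr rfl; intro i _; rw [Nat.add_comm]
      rw [h1]
      exact le_trans (Summable.sum_le_tsum (range k) (fun i _ => hv0 _) hvsumN) hvN.le
    -- main induction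
    have main : ∀ k, s (N + k) ≤ (∏ i ∈ range k, (1 - a (N + i))) * s N + ε / 3
        + ∑ i ∈ range k, v (N + i) := by
      intro k
      induction k with
      | zero => simp; linarith
      | succ k ih =>
        have hrk : r (N + k) ≤ ε / 3 := hN₁ _ (le_trans (le_max_left _ _) (Nat.le_add_right N k))
        have hak := ha (N + k)
        have hprod0 : 0 ≤ ∏ i ∈ range k, (1 - a (N + i)) :=
          Finset.prod_nonneg fun i _ => by linarith [(ha (N + i)).2]
        have hTk : 0 ≤ ∑ i ∈ range k, v (N + i) :=
          Finset.sum_nonneg fun i _ => hv0 _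
        have h1 : s (N + (k + 1)) ≤ (1 - a (N + k)) * s (N + k) + a (N + k) * r (N + k)
            + v (N + k) := by
          have := hrec (N + k); rwa [show N + (k + 1) = N + k + 1 from rfl]
        have h2 : a (N + k) * r (N + k) ≤ a (N + k) * (ε / 3) :=
          mul_le_mul_of_nonneg_left hrk hak.1.le
        have h3 : (1 - a (N + k)) * s (N + k) ≤ (1 - a (N + k)) *
            ((∏ i ∈ range k, (1 - a (N + i))) * s N + ε / 3 + ∑ i ∈ range k, v (N + i)) :=
          mul_le_mul_of_nonneg_left ih (by linarith [hak.2])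
        rw [Finset.prod_range_succ, Finset.sum_range_succ]
        have hsN := hs0 N
        nlinarith [hak.1, hak.2, mul_nonneg hprod0 hsN]
    -- the product term tends to zero
    have hA : Tendsto (fun k => ∑ i ∈ range k, a (N + i)) atTop atTop := by
      have h1 : Tendsto (fun k => ∑ i ∈ range (k + N), a i) atTop atTop :=
        hdiv.comp (tendsto_add_atTop_nat N)
      have h2 : ∀ k, ∑ i ∈ range k, a (N + i)
          = ∑ i ∈ range (k + N), a i - ∑ i ∈ range N, a i := by
        intro k; rw [Nat.add_comm k N, Finset.sum_range_add]; ring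
      simpa only [h2, sub_eq_add_neg] using h1.atTop_add tendsto_const_nhds
    have hPexp : ∀ k, ∏ i ∈ range k, (1 - a (N + i))
        ≤ Real.exp (-∑ i ∈ range k, a (N + i)) := by
      intro k
      have hexp : Real.exp (-∑ i ∈ range k, a (N + i))
          = ∏ i ∈ range k, Real.exp (-a (N + i)) := by
        rw [← Real.exp_sum, Finset.sum_neg_distrib]
      rw [hexp]
      apply Finset.prod_le_prod
      · intro i _; linarith [(ha (N + i)).2]
      · intro i _
        have := Real.add_one_le_exp (-a (N + i))
        linarith
    have hP0 : ∀ k, 0 ≤ ∏ i ∈ range k, (1 - a (N + i)) := fun k =>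
      Finset.prod_nonneg fun i _ => by linarith [(ha (N + i)).2]
    have hPtend : Tendsto (fun k => (∏ i ∈ range k, (1 - a (N + i))) * s N) atTop (nhds 0) := by
      have hexp : Tendsto (fun k => Real.exp (-∑ i ∈ range k, a (N + i)) * s N)
          atTop (nhds 0) := by
        have := (Real.tendsto_exp_neg_atTop_nhds_zero.comp hA).mul_const (s N)
        simpa using this
      apply squeeze_zero (fun k => mul_nonneg (hP0 k) (hs0 N))
        (fun k => mul_le_mul_of_nonneg_right (hPexp k) (hs0 N)) hexp
    have hPsmall : ∀ᶠ k in atTop, (∏ i ∈ range k, (1 - a (N + i))) * s N ≤ ε / 3 :=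
      hPtend.eventually_le_const (by linarith : (0:ℝ) < ε/3)
    obtain ⟨K, hK⟩ := eventually_atTop.1 hPsmall
    rw [eventually_atTop]
    refine ⟨N + K, fun n hn => ?_⟩
    obtain ⟨k, rfl⟩ := Nat.exists_eq_add_of_le (le_trans (Nat.le_add_right N K) hn)
    have hk : K ≤ k := by omega
    calc s (N + k) ≤ (∏ i ∈ range k, (1 - a (N + i))) * s N + ε / 3
        + ∑ i ∈ range k, v (N + i) := main k
      _ ≤ ε / 3 + ε / 3 + ε / 3 := by
          have := hK k hk; have := hT k; linarith
      _ = ε := by ring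
  rw [Metric.tendsto_atTop]
  intro ε hε
  obtain ⟨M, hM⟩ := eventually_atTop.1 (key (ε / 2) (by linarith))
  refine ⟨M, fun n hn => ?_⟩
  rw [Real.dist_eq, sub_zero, abs_of_nonneg (hs0 n)]
  linarith [hM n hn]
end

section
/- Let (s_n) be a bounded sequence of nonnegative real numbers and D ∈ ℕ, D ≥ 1, an upper bound on (s_n). Let (a_n) ⊂ [0,1], (r_n) ⊂ ℝ and (v_n) ⊂ [0,∞) be sequences, and let A : ℕ → ℕ, R, V : (0,∞) → ℕ be functions such that (i) A is a rate of divergence for ∑ a_n, (ii) for all ε > 0 and all n ≥ R(ε) one has r_n ≤ ε, and (iii) V is a Cauchy rate for ∑ v_n. If s_{n+1} ≤ (1 − a_n)·s_n + a_n·r_n + v_n for all n ∈ ℕ, then lim s_n = 0 with rate of convergence θ(ε) := A(K + ⌈ln(3D/ε)⌉) + 1, where K := max{ R(ε/3), V(ε/3) + 1 }; that is, for all ε > 0 and all n ≥ θ(ε), s_n ≤ ε. -/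
/-- Quantitative Xu lemma with rate of divergence `A`, rate `R` for `rₙ`, and
Cauchy rate `V` for `∑ vₙ`: the rate of convergence of `sₙ` towards `0` is
`θ(ε) = A(K + ⌈ln(3D/ε)⌉) + 1` where `K = max{R(ε/3), V(ε/3) + 1}`. -/
theorem stmt1 (s a r v : ℕ → ℝ) (D : ℕ) (hD : 1 ≤ D)
    (hs0 : ∀ n, 0 ≤ s n) (hsD : ∀ n, s n ≤ (D : ℝ))
    (ha : ∀ n, a n ∈ Set.Icc (0 : ℝ) 1)
    (hv0 : ∀ n, 0 ≤ v n)
    (A : ℕ → ℕ) (R V : ℝ → ℕ)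
    (hA : ∀ k : ℕ, (k : ℝ) ≤ ∑ i ∈ Finset.range (A k + 1), a i)
    (hR : ∀ ε : ℝ, 0 < ε → ∀ n ≥ R ε, r n ≤ ε)
    (hV : ∀ ε : ℝ, 0 < ε → ∀ n : ℕ, ∑ i ∈ Finset.Icc (V ε + 1) (V ε + n), v i ≤ ε)
    (hrec : ∀ n, s (n + 1) ≤ (1 - a n) * s n + a n * r n + v n) :
    ∀ ε : ℝ, 0 < ε →
      ∀ n ≥ A (max (R (ε / 3)) (V (ε / 3) + 1) + ⌈Real.log (3 * D / ε)⌉₊) + 1,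
        s n ≤ ε := by
  intro ε hε n hn
  set ε3 := ε / 3 with hε3
  have hε3pos : 0 < ε3 := by positivity
  set K := max (R ε3) (V ε3 + 1) with hKdef
  set c := ⌈Real.log (3 * D / ε)⌉₊ with hcdef
  have hKV : V ε3 + 1 ≤ K := le_max_right _ _
  have hKR : R ε3 ≤ K := le_max_left _ _
  have hP01 : ∀ m : ℕ, 0 ≤ (∏ i ∈ Finset.Ico K m, (1 - a i)) ∧
      (∏ i ∈ Finset.Ico K m, (1 - a i)) ≤ 1 := by
    intro m
    refine ⟨Finset.prod_nonneg fun i _ => by linarith [(ha i).2], ?_⟩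
    exact Finset.prod_le_one (fun i _ => by linarith [(ha i).2])
      (fun i _ => by linarith [(ha i).1])
  have key : ∀ m : ℕ, s (K + m) ≤ (D : ℝ) * (∏ i ∈ Finset.Ico K (K + m), (1 - a i))
      + ε3 * (1 - ∏ i ∈ Finset.Ico K (K + m), (1 - a i))
      + ∑ i ∈ Finset.Ico K (K + m), v i := by
    intro m
    induction m with
    | zero => simpa using hsD K
    | succ m ih =>
      have hN : K ≤ K + m := Nat.le_add_right _ _
      rw [show K + (m + 1) = (K + m) + 1 from rfl, Finset.prod_Ico_succ_top hN,
        Finset.sum_Ico_succ_top hN]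
      have hr : r (K + m) ≤ ε3 := hR ε3 hε3pos _ (le_trans hKR hN)
      have haN := ha (K + m)
      have hP := hP01 (K + m)
      have hrecN := hrec (K + m)
      have hSvnn : 0 ≤ ∑ i ∈ Finset.Ico K (K + m), v i :=
        Finset.sum_nonneg fun i _ => hv0 i
      set P := ∏ i ∈ Finset.Ico K (K + m), (1 - a i) with hPdef
      set Sv := ∑ i ∈ Finset.Ico K (K + m), v i with hSvdef
      have h1 : (1 - a (K + m)) * s (K + m) ≤
          (1 - a (K + m)) * ((D : ℝ) * P + ε3 * (1 - P) + Sv) :=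
        mul_le_mul_of_nonneg_left ih (by linarith [haN.2])
      have h2 : a (K + m) * r (K + m) ≤ a (K + m) * ε3 :=
        mul_le_mul_of_nonneg_left hr haN.1
      have h3 : 0 ≤ a (K + m) * Sv := mul_nonneg haN.1 hSvnn
      nlinarith [hv0 (K + m), hs0 (K + m), haN.1, haN.2, hP.1, hP.2]
  have hKθ : K ≤ A (K + c) + 1 := by
    have h := hA (K + c)
    have hub : (∑ i ∈ Finset.range (A (K + c) + 1), a i) ≤ ((A (K + c) + 1 : ℕ) : ℝ) := by
      calc ∑ i ∈ Finset.range (A (K + c) + 1), a i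
          ≤ ∑ _i ∈ Finset.range (A (K + c) + 1), (1 : ℝ) :=
            Finset.sum_le_sum fun i _ => (ha i).2
        _ = ((A (K + c) + 1 : ℕ) : ℝ) := by simp
    have hcast : (K : ℝ) ≤ ((A (K + c) + 1 : ℕ) : ℝ) := by
      push_cast at h hub ⊢
      linarith
    exact_mod_cast hcast
  have hnK : K ≤ n := le_trans hKθ hn
  obtain ⟨m, rfl⟩ : ∃ m, n = K + m := ⟨n - K, by omega⟩
  have hkey := key m
  have hv_bound : ∑ i ∈ Finset.Ico K (K + m), v i ≤ ε3 := by
    have hsub : Finset.Ico K (K + m) ⊆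
        Finset.Icc (V ε3 + 1) (V ε3 + (K + m - 1 - V ε3)) := by
      intro i hi
      simp only [Finset.mem_Ico, Finset.mem_Icc] at hi ⊢
      omega
    calc ∑ i ∈ Finset.Ico K (K + m), v i
        ≤ ∑ i ∈ Finset.Icc (V ε3 + 1) (V ε3 + (K + m - 1 - V ε3)), v i :=
          Finset.sum_le_sum_of_subset_of_nonneg hsub (fun i _ _ => hv0 i)
      _ ≤ ε3 := hV ε3 hε3pos _
  have hprod : (D : ℝ) * ∏ i ∈ Finset.Ico K (K + m), (1 - a i) ≤ ε3 := by
    have h1 : ∏ i ∈ Finset.Ico K (K + m), (1 - a i) ≤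
        Real.exp (-∑ i ∈ Finset.Ico K (K + m), a i) := by
      calc ∏ i ∈ Finset.Ico K (K + m), (1 - a i)
          ≤ ∏ i ∈ Finset.Ico K (K + m), Real.exp (-(a i)) :=
            Finset.prod_le_prod (fun i _ => by linarith [(ha i).2])
              (fun i _ => by linarith [Real.add_one_le_exp (-(a i))])
        _ = Real.exp (∑ i ∈ Finset.Ico K (K + m), -(a i)) := (Real.exp_sum _ _).symm
        _ = Real.exp (-∑ i ∈ Finset.Ico K (K + m), a i) := by rw [Finset.sum_neg_distrib]
    have hS : Real.log (3 * D / ε) ≤ ∑ i ∈ Finset.Ico K (K + m), a i := by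
      have h2 : ((K + c : ℕ) : ℝ) ≤ ∑ i ∈ Finset.range (K + m), a i := by
        have hAc := hA (K + c)
        have hmono : ∑ i ∈ Finset.range (A (K + c) + 1), a i ≤
            ∑ i ∈ Finset.range (K + m), a i :=
          Finset.sum_le_sum_of_subset_of_nonneg
            (Finset.range_subset_range.mpr (by omega)) (fun i _ _ => (ha i).1)
        linarith
      have h3 : ∑ i ∈ Finset.range K, a i ≤ (K : ℝ) := by
        calc ∑ i ∈ Finset.range K, a i ≤ ∑ _i ∈ Finset.range K, (1 : ℝ) :=
              Finset.sum_le_sum fun i _ => (ha i).2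
          _ = (K : ℝ) := by simp
      have h4 : ∑ i ∈ Finset.Ico K (K + m), a i =
          ∑ i ∈ Finset.range (K + m), a i - ∑ i ∈ Finset.range K, a i :=
        Finset.sum_Ico_eq_sub _ (Nat.le_add_right _ _)
      have h5 : Real.log (3 * D / ε) ≤ (c : ℝ) := Nat.le_ceil _
      push_cast at h2
      linarith
    have hD0 : (0 : ℝ) < D := by exact_mod_cast hD
    calc (D : ℝ) * ∏ i ∈ Finset.Ico K (K + m), (1 - a i)
        ≤ (D : ℝ) * Real.exp (-∑ i ∈ Finset.Ico K (K + m), a i) :=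
          mul_le_mul_of_nonneg_left h1 (by positivity)
      _ ≤ (D : ℝ) * Real.exp (-Real.log (3 * D / ε)) := by
          apply mul_le_mul_of_nonneg_left _ (by positivity)
          exact Real.exp_le_exp.mpr (by linarith)
      _ = ε3 := by
          rw [Real.exp_neg, Real.exp_log (by positivity)]
          rw [hε3]
          field_simp
  have hP := hP01 (K + m)
  have hlast : ε3 * (1 - ∏ i ∈ Finset.Ico K (K + m), (1 - a i)) ≤ ε3 := by
    nlinarith [hP.1, hP.2]
  linarith
end

section
/- Let (s_n) be a bounded sequence of nonnegative real numbers and D ∈ ℕ, D ≥ 1, an upper bound on (s_n). Let (a_n) ⊂ [0,1], (r_n) ⊂ ℝ and (v_n) ⊂ [0,∞) be sequences, and let A' : ℕ × (0,∞) → ℕ, R, V : (0,∞) → ℕ be functions such that (i) for all ε > 0 and all m ∈ ℕ, ∏_{i=m}^{A'(m,ε)} (1 − a_i) ≤ ε, (ii) for all ε > 0 and all n ≥ R(ε) one has r_n ≤ ε, and (iii) V is a Cauchy rate for ∑ v_n. If s_{n+1} ≤ (1 − a_n)·s_n + a_n·r_n + v_n for all n ∈ ℕ, then lim s_n = 0 with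 rate of convergence θ'(ε) := A'(K, ε/(3D)) + 1, where K := max{ R(ε/3), V(ε/3) + 1 }; that is, for all ε > 0 and all n ≥ θ'(ε), s_n ≤ ε. -/
/-- Quantitative Xu lemma with a function `A'` such that
`∏_{i=m}^{A'(m,ε)} (1 - aᵢ) ≤ ε`: the rate of convergence of `sₙ` towards `0` is
`θ'(ε) = A'(K, ε/(3D)) + 1` where `K = max{R(ε/3), V(ε/3) + 1}`. -/
theorem stmt2 (s a r v : ℕ → ℝ) (D : ℕ) (hD : 1 ≤ D)
    (hs0 : ∀ n, 0 ≤ s n) (hsD : ∀ n, s n ≤ (D : ℝ))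
    (ha : ∀ n, a n ∈ Set.Icc (0 : ℝ) 1)
    (hv0 : ∀ n, 0 ≤ v n)
    (A' : ℕ → ℝ → ℕ) (R V : ℝ → ℕ)
    (hA' : ∀ ε : ℝ, 0 < ε → ∀ m : ℕ, ∏ i ∈ Finset.Icc m (A' m ε), (1 - a i) ≤ ε)
    (hR : ∀ ε : ℝ, 0 < ε → ∀ n ≥ R ε, r n ≤ ε)
    (hV : ∀ ε : ℝ, 0 < ε → ∀ n : ℕ, ∑ i ∈ Finset.Icc (V ε + 1) (V ε + n), v i ≤ ε)
    (hrec : ∀ n, s (n + 1) ≤ (1 - a n) * s n + a n * r n + v n) :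
    ∀ ε : ℝ, 0 < ε →
      ∀ n ≥ A' (max (R (ε / 3)) (V (ε / 3) + 1)) (ε / (3 * D)) + 1,
        s n ≤ ε := by
  intro ε hε n hn
  set K := max (R (ε / 3)) (V (ε / 3) + 1) with hKdef
  have hD0 : (0:ℝ) < D := by exact_mod_cast hD
  by_cases hεD : (3 * (D:ℝ)) ≤ ε
  · have h1 : (1:ℝ) ≤ D := by exact_mod_cast hD
    have := hsD n
    nlinarith
  push_neg at hεD
  have hε3 : 0 < ε / 3 := by linarith
  have hεD' : 0 < ε / (3 * D) := by positivity
  have hεD1 : ε / (3 * D) < 1 := by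
    rw [div_lt_one (by positivity)]; linarith
  have hAK : K ≤ A' K (ε / (3 * D)) := by
    by_contra h
    push_neg at h
    have h2 := hA' (ε / (3*D)) hεD' K
    rw [Finset.Icc_eq_empty (by omega)] at h2
    simp at h2
    linarith
  have key : ∀ m : ℕ, s (K + m + 1) ≤
      (∏ i ∈ Finset.Icc K (K + m), (1 - a i)) * D + ε / 3
        + ∑ i ∈ Finset.Icc K (K + m), v i := by
    intro m
    induction m with
    | zero =>
      simp only [Nat.add_zero, Finset.Icc_self, Finset.prod_singleton,
        Finset.sum_singleton]
      have h1 := hrec K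
      have hrK : r K ≤ ε / 3 := hR (ε/3) hε3 K (le_max_left _ _)
      obtain ⟨h0a, h1a⟩ := ha K
      have hsK := hsD K
      have hsK0 := hs0 K
      nlinarith
    | succ m ih =>
      have heq : K + (m+1) = (K + m) + 1 := by omega
      rw [heq, Finset.prod_Icc_succ_top (by omega), Finset.sum_Icc_succ_top (by omega)]
      have h1 := hrec (K + m + 1)
      have hrm : r (K + m + 1) ≤ ε / 3 := hR (ε/3) hε3 _
        (by have := le_max_left (R (ε/3)) (V (ε/3)+1); omega)
      obtain ⟨h0a, h1a⟩ := ha (K + m + 1)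
      have hprod0 : 0 ≤ ∏ i ∈ Finset.Icc K (K + m), (1 - a i) :=
        Finset.prod_nonneg (fun i _ => by have := (ha i).2; linarith)
      have hsum0 : 0 ≤ ∑ i ∈ Finset.Icc K (K+m), v i :=
        Finset.sum_nonneg (fun i _ => hv0 i)
      have hs0' := hs0 (K + m + 1)
      have hv' := hv0 (K + m + 1)
      nlinarith
  obtain ⟨m, rfl⟩ : ∃ m, n = K + m + 1 := ⟨n - K - 1, by omega⟩
  have h1 := key m
  set N := A' K (ε / (3 * D)) with hNdef
  have hNn : N ≤ K + m := by omega
  have hprod : ∏ i ∈ Finset.Icc K (K + m), (1 - a i) ≤ ε / (3 * D) := by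
    have hsplit : (∏ i ∈ Finset.Ico K (N+1), (1 - a i))
        * ∏ i ∈ Finset.Ico (N+1) (K + m + 1), (1 - a i)
        = ∏ i ∈ Finset.Ico K (K + m + 1), (1 - a i) :=
      Finset.prod_Ico_consecutive _ (by omega) (by omega)
    have h2 : ∏ i ∈ Finset.Ico (N+1) (K + m + 1), (1 - a i) ≤ 1 :=
      Finset.prod_le_one (fun i _ => by have := (ha i).2; linarith)
        (fun i _ => by have := (ha i).1; linarith)
    have h3 : 0 ≤ ∏ i ∈ Finset.Ico K (N+1), (1 - a i) :=
      Finset.prod_nonneg (fun i _ => by have := (ha i).2; linarith)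
    have h4 : ∏ i ∈ Finset.Ico K (N+1), (1 - a i) ≤ ε / (3 * D) := by
      have := hA' (ε / (3*D)) hεD' K
      rwa [show Finset.Icc K N = Finset.Ico K (N+1) by
        rw [Finset.Ico_add_one_right_eq_Icc]] at this
    calc ∏ i ∈ Finset.Icc K (K + m), (1 - a i)
        = ∏ i ∈ Finset.Ico K (K + m + 1), (1 - a i) := by
          rw [Finset.Ico_add_one_right_eq_Icc]
      _ ≤ ε / (3 * D) := by
          rw [← hsplit]
          nlinarith
  have hsum : ∑ i ∈ Finset.Icc K (K + m), v i ≤ ε / 3 := by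
    have hVK : V (ε/3) + 1 ≤ K := le_max_right _ _
    have hsub : Finset.Icc K (K + m) ⊆
        Finset.Icc (V (ε/3) + 1) (V (ε/3) + (K + m)) := by
      intro i hi
      simp only [Finset.mem_Icc] at hi ⊢
      omega
    calc ∑ i ∈ Finset.Icc K (K + m), v i
        ≤ ∑ i ∈ Finset.Icc (V (ε/3) + 1) (V (ε/3) + (K + m)), v i :=
          Finset.sum_le_sum_of_subset_of_nonneg hsub (fun i _ _ => hv0 i)
      _ ≤ ε / 3 := hV (ε/3) hε3 (K + m)
  have hPD : (∏ i ∈ Finset.Icc K (K + m), (1 - a i)) * D ≤ ε / 3 := by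
    rw [div_mul_eq_div_div] at hprod
    calc (∏ i ∈ Finset.Icc K (K + m), (1 - a i)) * D ≤ (ε / 3 / D) * D := by
          apply mul_le_mul_of_nonneg_right hprod (le_of_lt hD0)
      _ = ε / 3 := by field_simp
  linarith
end

section
/- Let (s_n) be a bounded sequence of nonnegative real numbers and D ∈ ℕ, D ≥ 1, an upper bound on (s_n). Let (a_n) ⊂ [0,1] and (r_n) ⊂ ℝ be sequences, and let A : ℕ → ℕ be a rate of divergence for ∑ a_n. Let ε > 0, K, P ∈ ℕ and ℰ ≥ 0 be given. If for all n ∈ [K, P]: (i) s_{n+1} ≤ (1 − a_n)·s_n + a_n·r_n + ℰ, (ii) r_n ≤ ε/3, and (iii) ℰ ≤ ε/(3(P+1)), then s_n ≤ ε for all n ∈ [σ, P], where σ := A(K + ⌈ln(3D/ε)⌉) + 1. -/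
/-- Finitary Xu lemma with error term `E`: if on the interval `[K, P]` the
recursive inequality holds with error `E ≤ ε/(3(P+1))` and `rₙ ≤ ε/3`, then
`sₙ ≤ ε` for all `n ∈ [σ, P]` with `σ = A(K + ⌈ln(3D/ε)⌉) + 1`. -/
theorem stmt3 (s a r : ℕ → ℝ) (D : ℕ) (hD : 1 ≤ D)
    (hs0 : ∀ n, 0 ≤ s n) (hsD : ∀ n, s n ≤ (D : ℝ))
    (ha : ∀ n, a n ∈ Set.Icc (0 : ℝ) 1)
    (A : ℕ → ℕ)
    (hA : ∀ k : ℕ, (k : ℝ) ≤ ∑ i ∈ Finset.range (A k + 1), a i)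
    (ε : ℝ) (hε : 0 < ε) (K P : ℕ) (E : ℝ) (hE : 0 ≤ E)
    (h1 : ∀ n, K ≤ n → n ≤ P → s (n + 1) ≤ (1 - a n) * s n + a n * r n + E)
    (h2 : ∀ n, K ≤ n → n ≤ P → r n ≤ ε / 3)
    (h3 : E ≤ ε / (3 * (P + 1))) :
    ∀ n, A (K + ⌈Real.log (3 * D / ε)⌉₊) + 1 ≤ n → n ≤ P → s n ≤ ε := by
  set N := ⌈Real.log (3 * D / ε)⌉₊ with hN
  have hDpos : (0:ℝ) < D := by exact_mod_cast Nat.lt_of_lt_of_le Nat.zero_lt_one hD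
  -- key induction
  have key : ∀ m, K ≤ m → m ≤ P + 1 →
      s m ≤ (∏ i ∈ Finset.Ico K m, (1 - a i)) * D + ε/3 + ((m - K : ℕ) : ℝ) * E := by
    intro m
    induction m with
    | zero =>
      intro hK _
      interval_cases K
      simp only [Finset.Ico_self, Finset.prod_empty, one_mul, Nat.sub_self, Nat.cast_zero,
        zero_mul, add_zero]
      have := hsD 0
      linarith
    | succ m ih =>
      intro hK hP
      rcases Nat.lt_or_ge m K with hlt | hge
      · -- K = m + 1
        have hKe : K = m + 1 := le_antisymm hK hlt
        subst hKe
        simp only [Finset.Ico_self, Finset.prod_empty, one_mul, Nat.sub_self, Nat.cast_zero,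
          zero_mul, add_zero]
        have := hsD (m+1)
        linarith
      · have hmP : m ≤ P := Nat.lt_succ_iff.mp (Nat.lt_of_succ_le hP)
        have ihm := ih hge (le_trans hmP (Nat.le_succ P))
        have hsm := h1 m hge hmP
        have hrm := h2 m hge hmP
        obtain ⟨ha0, ha1⟩ := ha m
        have hprod0 : (0:ℝ) ≤ ∏ i ∈ Finset.Ico K m, (1 - a i) :=
          Finset.prod_nonneg (fun i _ => by have := (ha i).2; linarith)
        have hprodsucc : ∏ i ∈ Finset.Ico K (m+1), (1 - a i)
            = (∏ i ∈ Finset.Ico K m, (1 - a i)) * (1 - a m) := by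
          rw [Finset.prod_Ico_succ_top hge]
        have hsub : ((m + 1 - K : ℕ) : ℝ) = ((m - K : ℕ) : ℝ) + 1 := by
          rw [Nat.succ_sub hge]; push_cast; ring
        rw [hprodsucc, hsub]
        have hcast : (0:ℝ) ≤ ((m - K : ℕ) : ℝ) := Nat.cast_nonneg _
        nlinarith [mul_le_mul_of_nonneg_left hrm ha0, mul_nonneg hcast hE,
          mul_nonneg ha0 (mul_nonneg hcast hE), mul_nonneg ha0 hprod0,
          mul_nonneg (mul_nonneg ha0 hprod0) hDpos.le]
  intro n hσ hP
  -- K ≤ n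
  have hsumK : ((K + N : ℕ) : ℝ) ≤ ∑ i ∈ Finset.range (A (K + N) + 1), a i := hA (K + N)
  have hsumle : ∀ (T : Finset ℕ), ∑ i ∈ T, a i ≤ T.card := by
    intro T
    calc ∑ i ∈ T, a i ≤ ∑ _i ∈ T, (1:ℝ) := Finset.sum_le_sum (fun i _ => (ha i).2)
    _ = T.card := by simp
  have hKA : K ≤ A (K + N) + 1 := by
    have h := le_trans hsumK (hsumle _)
    simp only [Finset.card_range] at h
    have h' : (K : ℝ) ≤ (A (K + N) + 1 : ℕ) := by
      have hKK : ((K:ℝ)) ≤ ((K + N : ℕ):ℝ) := by push_cast; linarith [Nat.cast_nonneg (α := ℝ) N]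
      exact le_trans hKK (by exact_mod_cast h)
    exact_mod_cast h'
  have hKn : K ≤ n := le_trans hKA hσ
  have hmain := key n hKn (le_trans hP (Nat.le_succ P))
  -- bound the product
  have hsum_lower : (N : ℝ) ≤ ∑ i ∈ Finset.Ico K n, a i := by
    have hsplit : Finset.range (A (K+N) + 1) = Finset.range K ∪ Finset.Ico K (A (K+N)+1) := by
      rw [Finset.range_eq_Ico, Finset.range_eq_Ico, Finset.Ico_union_Ico_eq_Ico (Nat.zero_le _) hKA]
    have h1' : ∑ i ∈ Finset.range (A (K+N) + 1), a i
        ≤ (K : ℝ) + ∑ i ∈ Finset.Ico K (A (K+N)+1), a i := by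
      rw [hsplit, Finset.sum_union]
      · gcongr
        · have := hsumle (Finset.range K); simpa using this
      · rw [Finset.range_eq_Ico]; exact Finset.Ico_disjoint_Ico_consecutive 0 K _
    have h2' : ∑ i ∈ Finset.Ico K (A (K+N)+1), a i ≤ ∑ i ∈ Finset.Ico K n, a i := by
      apply Finset.sum_le_sum_of_subset_of_nonneg
      · exact Finset.Ico_subset_Ico le_rfl hσ
      · intro i _ _; exact (ha i).1
    push_cast at hsumK
    linarith
  have hprod_exp : ∏ i ∈ Finset.Ico K n, (1 - a i)
      ≤ Real.exp (-(∑ i ∈ Finset.Ico K n, a i)) := by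
    rw [← Finset.sum_neg_distrib, Real.exp_sum]
    apply Finset.prod_le_prod
    · intro i _; have := (ha i).2; linarith
    · intro i _
      have := Real.add_one_le_exp (-(a i))
      linarith
  have hexp_small : Real.exp (-(∑ i ∈ Finset.Ico K n, a i)) ≤ ε / (3 * D) := by
    have hlog : Real.log (3 * D / ε) ≤ (N : ℝ) := Nat.le_ceil _
    have h3D : (0:ℝ) < 3 * D / ε := by positivity
    calc Real.exp (-(∑ i ∈ Finset.Ico K n, a i))
        ≤ Real.exp (-(N : ℝ)) := Real.exp_le_exp.mpr (by linarith)
      _ ≤ Real.exp (-(Real.log (3 * D / ε))) := Real.exp_le_exp.mpr (by linarith)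
      _ = (3 * D / ε)⁻¹ := by rw [Real.exp_neg, Real.exp_log h3D]
      _ = ε / (3 * D) := by field_simp
  have hterm1 : (∏ i ∈ Finset.Ico K n, (1 - a i)) * D ≤ ε / 3 := by
    calc (∏ i ∈ Finset.Ico K n, (1 - a i)) * D
        ≤ (ε / (3 * D)) * D := by
          apply mul_le_mul_of_nonneg_right _ hDpos.le
          exact le_trans hprod_exp hexp_small
      _ = ε / 3 := by field_simp
  have hterm3 : ((n - K : ℕ) : ℝ) * E ≤ ε / 3 := by
    have hcard : ((n - K : ℕ) : ℝ) ≤ (P : ℝ) + 1 := by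
      have : (n - K : ℕ) ≤ P + 1 := by omega
      exact_mod_cast this
    have hP1 : (0:ℝ) < 3 * ((P:ℝ) + 1) := by positivity
    have hE' : ((P:ℝ) + 1) * E ≤ ε / 3 := by
      rw [le_div_iff₀ hP1] at h3
      nlinarith
    nlinarith [mul_le_mul_of_nonneg_right hcard hE]
  linarith
end

section
/- Let (s_n) be a bounded sequence of nonnegative real numbers and D ∈ ℕ, D ≥ 1, an upper bound on (s_n). Let (a_n) ⊂ [0,1] and (r_n) ⊂ ℝ be sequences, and let A' : ℕ × (0,∞) → ℕ be a function such that for all ε > 0 and all m ∈ ℕ, ∏_{i=m}^{A'(m,ε)} (1 − a_i) ≤ ε. Let ε > 0, K, P ∈ ℕ and ℰ ≥ 0 be given. If for all n ∈ [K, P]: (i) s_{n+1} ≤ (1 − a_n)·s_n + a_n·r_n + ℰ, (ii) r_n ≤ ε/3, and (iii) ℰ ≤ ε/(3(P+1)), then s_n ≤ ε for all n ∈ [σ', P], where σ' := A'(K, ε/(3D)) + 1. -/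
/-- Finitary Xu lemma with error term `E` and a function `A'` such that
`∏_{i=m}^{A'(m,ε)} (1 - aᵢ) ≤ ε`: if on `[K, P]` the recursive inequality holds
with error `E ≤ ε/(3(P+1))` and `rₙ ≤ ε/3`, then `sₙ ≤ ε` for all
`n ∈ [σ', P]` with `σ' = A'(K, ε/(3D)) + 1`. -/
theorem stmt4 (s a r : ℕ → ℝ) (D : ℕ) (hD : 1 ≤ D)
    (hs0 : ∀ n, 0 ≤ s n) (hsD : ∀ n, s n ≤ (D : ℝ))
    (ha : ∀ n, a n ∈ Set.Icc (0 : ℝ) 1)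
    (A' : ℕ → ℝ → ℕ)
    (hA' : ∀ ε : ℝ, 0 < ε → ∀ m : ℕ, ∏ i ∈ Finset.Icc m (A' m ε), (1 - a i) ≤ ε)
    (ε : ℝ) (hε : 0 < ε) (K P : ℕ) (E : ℝ) (hE : 0 ≤ E)
    (h1 : ∀ n, K ≤ n → n ≤ P → s (n + 1) ≤ (1 - a n) * s n + a n * r n + E)
    (h2 : ∀ n, K ≤ n → n ≤ P → r n ≤ ε / 3)
    (h3 : E ≤ ε / (3 * (P + 1))) :
    ∀ n, A' K (ε / (3 * D)) + 1 ≤ n → n ≤ P → s n ≤ ε := by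
  intro n hn hnP
  set σ := A' K (ε / (3 * D)) with hσdef
  have hD0 : (0:ℝ) < D := by
    have : (0:ℕ) < D := hD
    exact_mod_cast this
  have hεD : 0 < ε / (3 * D) := by positivity
  have hprodσ : ∏ i ∈ Finset.Icc K σ, (1 - a i) ≤ ε / (3 * D) := hA' _ hεD K
  by_cases hσK : σ < K
  · -- empty product ⇒ ε ≥ 3D ⇒ s n ≤ D ≤ ε
    rw [Finset.Icc_eq_empty (by omega), Finset.prod_empty] at hprodσ
    have h3D : (3:ℝ) * D ≤ ε := by
      rw [le_div_iff₀ (by positivity)] at hprodσ; linarith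
    have := hsD n
    nlinarith
  · push_neg at hσK
    have hKn : K < n := by omega
    -- key induction
    have key : ∀ m, K ≤ m → m ≤ P →
        s (m + 1) ≤ (∏ i ∈ Finset.Icc K m, (1 - a i)) * s K + ε / 3
          + ((m + 1 - K : ℕ) : ℝ) * E := by
      intro m hKm
      induction m, hKm using Nat.le_induction with
      | base =>
        intro hKP
        have hrec := h1 K le_rfl hKP
        have hr := h2 K le_rfl hKP
        obtain ⟨ha0, ha1⟩ := ha K
        have hcast : ((K + 1 - K : ℕ) : ℝ) = 1 := by norm_num
        rw [Finset.Icc_self, Finset.prod_singleton, hcast]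
        nlinarith [hs0 K]
      | succ m hKm ih =>
        intro hP
        have hmP : m ≤ P := by omega
        have ihm := ih hmP
        have hrec := h1 (m + 1) (by omega) hP
        have hr := h2 (m + 1) (by omega) hP
        obtain ⟨ha0, ha1⟩ := ha (m + 1)
        have hprodpos : 0 ≤ ∏ i ∈ Finset.Icc K m, (1 - a i) :=
          Finset.prod_nonneg fun i _ => by linarith [(ha i).2]
        have hsplit : ∏ i ∈ Finset.Icc K (m + 1), (1 - a i)
            = (∏ i ∈ Finset.Icc K m, (1 - a i)) * (1 - a (m + 1)) :=
          Finset.prod_Icc_succ_top (by omega) _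
        have hcast : ((m + 1 + 1 - K : ℕ) : ℝ) = ((m + 1 - K : ℕ) : ℝ) + 1 := by
          have : m + 1 + 1 - K = (m + 1 - K) + 1 := by omega
          rw [this]; push_cast; ring
        rw [hsplit, hcast]
        have hcE : 0 ≤ ((m + 1 - K : ℕ) : ℝ) * E := by positivity
        nlinarith [mul_le_mul_of_nonneg_left ihm (by linarith : (0:ℝ) ≤ 1 - a (m + 1))]
    -- apply at m = n - 1
    obtain ⟨m, rfl⟩ : ∃ m, n = m + 1 := ⟨n - 1, by omega⟩
    have hKm : K ≤ m := by omega
    have hσm : σ ≤ m := by omega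
    have hmP : m ≤ P := by omega
    have hbound := key m hKm hmP
    -- product monotonicity
    have hq0 : 0 ≤ ∏ i ∈ Finset.Ico (σ + 1) (m + 1), (1 - a i) :=
      Finset.prod_nonneg fun i _ => by linarith [(ha i).2]
    have hq1 : ∏ i ∈ Finset.Ico (σ + 1) (m + 1), (1 - a i) ≤ 1 :=
      Finset.prod_le_one (fun i _ => by linarith [(ha i).2])
        (fun i _ => by linarith [(ha i).1])
    have hPσ0 : 0 ≤ ∏ i ∈ Finset.Icc K σ, (1 - a i) :=
      Finset.prod_nonneg fun i _ => by linarith [(ha i).2]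
    have hsplit2 : (∏ i ∈ Finset.Icc K σ, (1 - a i))
        * (∏ i ∈ Finset.Ico (σ + 1) (m + 1), (1 - a i))
        = ∏ i ∈ Finset.Icc K m, (1 - a i) := by
      rw [show Finset.Icc K σ = Finset.Ico K (σ + 1) from rfl,
        show Finset.Icc K m = Finset.Ico K (m + 1) from rfl]
      exact Finset.prod_Ico_consecutive _ (by omega) (by omega)
    have hPm0 : 0 ≤ ∏ i ∈ Finset.Icc K m, (1 - a i) :=
      Finset.prod_nonneg fun i _ => by linarith [(ha i).2]
    have hPmle : ∏ i ∈ Finset.Icc K m, (1 - a i) ≤ ε / (3 * D) := by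
      rw [← hsplit2]
      calc (∏ i ∈ Finset.Icc K σ, (1 - a i))
            * (∏ i ∈ Finset.Ico (σ + 1) (m + 1), (1 - a i))
          ≤ (∏ i ∈ Finset.Icc K σ, (1 - a i)) * 1 :=
            mul_le_mul_of_nonneg_left hq1 hPσ0
        _ = ∏ i ∈ Finset.Icc K σ, (1 - a i) := mul_one _
        _ ≤ ε / (3 * D) := hprodσ
    -- first term ≤ ε/3
    have ht1 : (∏ i ∈ Finset.Icc K m, (1 - a i)) * s K ≤ ε / 3 := by
      have h1' : (∏ i ∈ Finset.Icc K m, (1 - a i)) * s K ≤ (ε / (3 * D)) * D := by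
        apply mul_le_mul hPmle (hsD K) (hs0 K) (le_of_lt hεD)
      have h2' : (ε / (3 * D)) * D = ε / 3 := by field_simp
      linarith
    -- error term ≤ ε/3
    have ht3 : ((m + 1 - K : ℕ) : ℝ) * E ≤ ε / 3 := by
      have hc : ((m + 1 - K : ℕ) : ℝ) ≤ (P : ℝ) + 1 := by
        have : (m + 1 - K : ℕ) ≤ P + 1 := by omega
        exact_mod_cast this
      have hP1 : (0:ℝ) < (P : ℝ) + 1 := by positivity
      have : ((m + 1 - K : ℕ) : ℝ) * E ≤ ((P : ℝ) + 1) * E :=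
        mul_le_mul_of_nonneg_right hc hE
      have h3' : ((P : ℝ) + 1) * E ≤ ((P : ℝ) + 1) * (ε / (3 * (P + 1))) :=
        mul_le_mul_of_nonneg_left h3 hP1.le
      have heq : ((P : ℝ) + 1) * (ε / (3 * ((P:ℝ) + 1))) = ε / 3 := by
        field_simp
      push_cast at h3' ⊢
      linarith [heq ▸ h3']
    linarith
end

section
/- Let (X, d) be a metric space and (x_n) a sequence in X. Then (x_n) has the metastability property, i.e. for all ε > 0 and all f : ℕ → ℕ there exists n ∈ ℕ such that d(x_i, x_j) ≤ ε for all i, j ∈ [n, f(n)], if and only if (x_n) is a Cauchy sequence. -/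
/-- A sequence in a metric space has the metastability property if and only if
it is a Cauchy sequence. -/
theorem stmt5 {X : Type*} [MetricSpace X] (x : ℕ → X) :
    (∀ ε : ℝ, 0 < ε → ∀ f : ℕ → ℕ, ∃ n : ℕ,
        ∀ i, n ≤ i → i ≤ f n → ∀ j, n ≤ j → j ≤ f n → dist (x i) (x j) ≤ ε)
      ↔ CauchySeq x := by
  constructor
  · intro h
    rw [Metric.cauchySeq_iff]
    intro ε hε
    by_contra hc
    push_neg at hc
    choose a ha b hb hd using hc
    obtain ⟨n, hn⟩ := h (ε/2) (by linarith) (fun N => max (a N) (b N))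
    have h1 := hn (a n) (ha n) (le_max_left _ _) (b n) (hb n) (le_max_right _ _)
    have := hd n
    linarith
  · intro h ε hε f
    obtain ⟨N, hN⟩ := Metric.cauchySeq_iff.mp h ε hε
    exact ⟨N, fun i hi _ j hj _ => (hN i hi j hj).le⟩
end

section
/- Let H be a real Hilbert space, C ⊆ H a nonempty convex subset, T, U : C → C nonexpansive maps with a common fixed point p, u, x₀ ∈ C, and (α_n), (β_n) ⊂ [0,1]. Let (x_n) be the alternating Halpern–Mann iteration with anchor u and starting point x₀, and let N ∈ ℕ, N ≥ 1, satisfy N ≥ max{‖x₀ − p‖, ‖u − p‖}. Assume Γ2 : ℕ → ℕ satisfies ∑_{i=0}^{Γ2(k)} α_i ≥ k for all k ∈ ℕ, Γ3 : (0,∞) → ℕ is a Cauchy rate for ∑|α_{n+1} − α_n|, and Γ4 : (0,∞) → ℕ is a Cauchy rate for ∑|β_{n+1} − β_n|. Then for all ε > 0 and all n ≥ θ1(ε) one has ‖x_{2n+2} − x_{2n}‖ ≤ ε, where θ1(ε) := A(V(ε/2) + ⌈ln(4N/ε)⌉ + 1) + 1, A(k) := Γ2(k+1), and V(ε) := max{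 Γ3(ε/(4N)), Γ4(ε/(4N)) }. -/
lemma comb_bound {H : Type*} [NormedAddCommGroup H] [NormedSpace ℝ H]
    (a b q : H) (t R : ℝ) (ht0 : 0 ≤ t) (ht1 : t ≤ 1)
    (ha : ‖a - q‖ ≤ R) (hb : ‖b - q‖ ≤ R) :
    ‖((1 - t) • a + t • b) - q‖ ≤ R := by
  have h : ((1 - t) • a + t • b) - q = (1 - t) • (a - q) + t • (b - q) := by module
  rw [h]
  calc ‖(1 - t) • (a - q) + t • (b - q)‖ ≤ (1-t)*‖a-q‖ + t*‖b-q‖ := by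
        refine le_trans (norm_add_le _ _) ?_
        rw [norm_smul, norm_smul, Real.norm_eq_abs, Real.norm_eq_abs,
          abs_of_nonneg (by linarith), abs_of_nonneg ht0]
    _ ≤ (1-t)*R + t*R := by
        have h1 : (1-t)*‖a-q‖ ≤ (1-t)*R := by nlinarith
        have h2 : t*‖b-q‖ ≤ t*R := by nlinarith
        linarith
    _ = R := by ring

lemma unroll (w a c : ℕ → ℝ) (hw : ∀ n, 0 ≤ w n) (hc : ∀ n, 0 ≤ c n)
    (ha0 : ∀ n, 0 ≤ a n) (ha1 : ∀ n, a n ≤ 1)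
    (hrec : ∀ n, w (n+1) ≤ a (n+1) * w n + c n) :
    ∀ m n, m ≤ n → w n ≤ w m * ∏ i ∈ Finset.Icc (m+1) n, a i + ∑ i ∈ Finset.Ico m n, c i := by
  intro m n hmn
  induction n, hmn using Nat.le_induction with
  | base => simp [Finset.Icc_eq_empty_of_lt (Nat.lt_succ_self m)]
  | succ n hmn ih =>
    have hprod : ∏ i ∈ Finset.Icc (m+1) (n+1), a i
        = (∏ i ∈ Finset.Icc (m+1) n, a i) * a (n+1) :=
      Finset.prod_Icc_succ_top (Nat.succ_le_succ hmn) a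
    have hsum : ∑ i ∈ Finset.Ico m (n+1), c i
        = (∑ i ∈ Finset.Ico m n, c i) + c n := Finset.sum_Ico_succ_top hmn c
    have hS : 0 ≤ ∑ i ∈ Finset.Ico m n, c i := Finset.sum_nonneg fun i _ => hc i
    have hP : 0 ≤ ∏ i ∈ Finset.Icc (m+1) n, a i := Finset.prod_nonneg fun i _ => ha0 i
    calc w (n+1) ≤ a (n+1) * w n + c n := hrec n
      _ ≤ a (n+1) * (w m * ∏ i ∈ Finset.Icc (m+1) n, a i + ∑ i ∈ Finset.Ico m n, c i) + c n := by
          have := mul_le_mul_of_nonneg_left ih (ha0 (n+1)); linarith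
      _ ≤ w m * ∏ i ∈ Finset.Icc (m+1) (n+1), a i + ∑ i ∈ Finset.Ico m (n+1), c i := by
          rw [hprod, hsum]
          have h1 : a (n+1) * ∑ i ∈ Finset.Ico m n, c i ≤ ∑ i ∈ Finset.Ico m n, c i := by
            nlinarith [ha0 (n+1), ha1 (n+1)]
          nlinarith [hw m]

lemma prod_one_sub_le_exp (a : ℕ → ℝ) (ha1 : ∀ n, a n ≤ 1)
    (s : Finset ℕ) :
    ∏ i ∈ s, (1 - a i) ≤ Real.exp (-(∑ i ∈ s, a i)) := by
  calc ∏ i ∈ s, (1 - a i) ≤ ∏ i ∈ s, Real.exp (-(a i)) :=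
        Finset.prod_le_prod (fun i _ => by linarith [ha1 i])
          (fun i _ => by have := Real.add_one_le_exp (-(a i)); linarith)
    _ = Real.exp (∑ i ∈ s, -(a i)) := (Real.exp_sum s _).symm
    _ = Real.exp (-(∑ i ∈ s, a i)) := by rw [Finset.sum_neg_distrib]

/-- `V(ε) := max{Γ3(ε/(4N)), Γ4(ε/(4N))}`. -/
noncomputable def Vrate (Γ3 Γ4 : ℝ → ℕ) (N : ℕ) (ε : ℝ) : ℕ :=
  max (Γ3 (ε / (4 * (N : ℝ)))) (Γ4 (ε / (4 * (N : ℝ))))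

/-- `θ1(ε) := A(V(ε/2) + ⌈ln(4N/ε)⌉ + 1) + 1`, where `A(k) := Γ2(k+1)`. -/
noncomputable def theta1 (Γ2 : ℕ → ℕ) (Γ3 Γ4 : ℝ → ℕ) (N : ℕ) (ε : ℝ) : ℕ :=
  Γ2 (Vrate Γ3 Γ4 N (ε / 2) + ⌈Real.log (4 * (N : ℝ) / ε)⌉₊ + 1 + 1) + 1

/-- Rate of convergence `θ1` for `‖x_{2n+2} - x_{2n}‖ → 0` for the alternating
Halpern–Mann iteration in a Hilbert space. -/
theorem stmt8 {H : Type*} [NormedAddCommGroup H] [InnerProductSpace ℝ H]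
    (C : Set H) (hCne : C.Nonempty) (hCconv : Convex ℝ C)
    (T U : H → H) (hTmaps : Set.MapsTo T C C) (hUmaps : Set.MapsTo U C C)
    (hTne : ∀ x ∈ C, ∀ y ∈ C, ‖T x - T y‖ ≤ ‖x - y‖)
    (hUne : ∀ x ∈ C, ∀ y ∈ C, ‖U x - U y‖ ≤ ‖x - y‖)
    (p : H) (hp : p ∈ C) (hTp : T p = p) (hUp : U p = p)
    (u x₀ : H) (hu : u ∈ C) (hx₀ : x₀ ∈ C)
    (α β : ℕ → ℝ)
    (hα : ∀ n, α n ∈ Set.Icc (0 : ℝ) 1) (hβ : ∀ n, β n ∈ Set.Icc (0 : ℝ) 1)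
    (x : ℕ → H) (hx0 : x 0 = x₀)
    (hxodd : ∀ n, x (2 * n + 1) = (1 - α n) • T (x (2 * n)) + α n • u)
    (hxeven : ∀ n, x (2 * n + 2) = (1 - β n) • U (x (2 * n + 1)) + β n • x (2 * n + 1))
    (N : ℕ) (hN1 : 1 ≤ N)
    (hN : max ‖x₀ - p‖ ‖u - p‖ ≤ (N : ℝ))
    (Γ2 : ℕ → ℕ) (Γ3 Γ4 : ℝ → ℕ)
    (hΓ2 : ∀ k : ℕ, (k : ℝ) ≤ ∑ i ∈ Finset.range (Γ2 k + 1), α i)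
    (hΓ3 : ∀ ε : ℝ, 0 < ε → ∀ n : ℕ,
      ∑ i ∈ Finset.Icc (Γ3 ε + 1) (Γ3 ε + n), |α (i + 1) - α i| ≤ ε)
    (hΓ4 : ∀ ε : ℝ, 0 < ε → ∀ n : ℕ,
      ∑ i ∈ Finset.Icc (Γ4 ε + 1) (Γ4 ε + n), |β (i + 1) - β i| ≤ ε) :
    ∀ ε : ℝ, 0 < ε → ∀ n ≥ theta1 Γ2 Γ3 Γ4 N ε,
      ‖x (2 * n + 2) - x (2 * n)‖ ≤ ε := by
  intro ε hε n hn
  have hNr1 : (1:ℝ) ≤ (N:ℝ) := by exact_mod_cast hN1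
  have hNpos : (0:ℝ) < (N:ℝ) := by linarith
  have hx0p : ‖x₀ - p‖ ≤ (N:ℝ) := le_trans (le_max_left _ _) hN
  have hup : ‖u - p‖ ≤ (N:ℝ) := le_trans (le_max_right _ _) hN
  -- odd step facts
  have oddfacts : ∀ m, x (2*m) ∈ C → ‖x (2*m) - p‖ ≤ (N:ℝ) →
      x (2*m+1) ∈ C ∧ ‖x (2*m+1) - p‖ ≤ (N:ℝ) := by
    intro m hmem hb
    have hT : ‖T (x (2*m)) - p‖ ≤ (N:ℝ) := by
      calc ‖T (x (2*m)) - p‖ = ‖T (x (2*m)) - T p‖ := by rw [hTp]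
        _ ≤ ‖x (2*m) - p‖ := hTne _ hmem _ hp
        _ ≤ (N:ℝ) := hb
    refine ⟨?_, ?_⟩
    · rw [hxodd m]
      exact hCconv (hTmaps hmem) hu (by linarith [(hα m).2]) (hα m).1 (by ring)
    · rw [hxodd m]
      exact comb_bound _ _ _ _ _ (hα m).1 (hα m).2 hT hup
  have evenfacts : ∀ m, x (2*m+1) ∈ C → ‖x (2*m+1) - p‖ ≤ (N:ℝ) →
      x (2*m+2) ∈ C ∧ ‖x (2*m+2) - p‖ ≤ (N:ℝ) := by
    intro m hmem hb
    have hU : ‖U (x (2*m+1)) - p‖ ≤ (N:ℝ) := by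
      calc ‖U (x (2*m+1)) - p‖ = ‖U (x (2*m+1)) - U p‖ := by rw [hUp]
        _ ≤ ‖x (2*m+1) - p‖ := hUne _ hmem _ hp
        _ ≤ (N:ℝ) := hb
    refine ⟨?_, ?_⟩
    · rw [hxeven m]
      exact hCconv (hUmaps hmem) hmem (by linarith [(hβ m).2]) (hβ m).1 (by ring)
    · rw [hxeven m]
      exact comb_bound _ _ _ _ _ (hβ m).1 (hβ m).2 hU hb
  have key : ∀ m, x (2*m) ∈ C ∧ ‖x (2*m) - p‖ ≤ (N:ℝ) := by
    intro m
    induction m with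
    | zero => rw [Nat.mul_zero, hx0]; exact ⟨hx₀, hx0p⟩
    | succ m ih =>
      obtain ⟨ho1, ho2⟩ := oddfacts m ih.1 ih.2
      have he := evenfacts m ho1 ho2
      have h2 : 2*(m+1) = 2*m+2 := by ring
      rw [h2]; exact he
  have keyodd : ∀ m, x (2*m+1) ∈ C ∧ ‖x (2*m+1) - p‖ ≤ (N:ℝ) :=
    fun m => oddfacts m (key m).1 (key m).2
  -- the sequences for the recurrence
  set w : ℕ → ℝ := fun i => ‖x (2*i+2) - x (2*i)‖ with hw_def
  set c : ℕ → ℝ := fun i => 2*(N:ℝ)*(|α (i+1) - α i| + |β (i+1) - β i|) with hc_def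
  set a : ℕ → ℝ := fun i => 1 - α i with ha_def
  have hwnn : ∀ i, 0 ≤ w i := fun i => norm_nonneg _
  have hcnn : ∀ i, 0 ≤ c i := by
    intro i
    have : (0:ℝ) ≤ |α (i+1) - α i| + |β (i+1) - β i| := by positivity
    simp only [hc_def]; positivity
  have ha0 : ∀ i, 0 ≤ a i := fun i => by simp only [ha_def]; linarith [(hα i).2]
  have ha1 : ∀ i, a i ≤ 1 := fun i => by simp only [ha_def]; linarith [(hα i).1]
  -- recurrence
  have hrec : ∀ m, w (m+1) ≤ a (m+1) * w m + c m := by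
    intro m
    -- odd difference bound
    have e1 : x (2*m+3) - x (2*m+1)
        = (1 - α (m+1)) • (T (x (2*m+2)) - T (x (2*m)))
          + (α (m+1) - α m) • (u - T (x (2*m))) := by
      have o1 := hxodd (m+1)
      have o0 := hxodd m
      have i1 : 2*(m+1)+1 = 2*m+3 := by ring
      have i2 : 2*(m+1) = 2*m+2 := by ring
      rw [i1, i2] at o1
      rw [o1, o0]; module
    have hTpb : ‖T (x (2*m)) - p‖ ≤ (N:ℝ) := by
      calc ‖T (x (2*m)) - p‖ = ‖T (x (2*m)) - T p‖ := by rw [hTp]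
        _ ≤ ‖x (2*m) - p‖ := hTne _ (key m).1 _ hp
        _ ≤ (N:ℝ) := (key m).2
    have huT : ‖u - T (x (2*m))‖ ≤ 2*(N:ℝ) := by
      calc ‖u - T (x (2*m))‖ = ‖(u - p) - (T (x (2*m)) - p)‖ := by
            rw [sub_sub_sub_cancel_right]
        _ ≤ ‖u - p‖ + ‖T (x (2*m)) - p‖ := norm_sub_le _ _
        _ ≤ 2*(N:ℝ) := by linarith
    have hmem2 : x (2*m+2) ∈ C := by
      have := (key (m+1)).1; have i2 : 2*(m+1) = 2*m+2 := by ring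
      rwa [i2] at this
    have hTd : ‖T (x (2*m+2)) - T (x (2*m))‖ ≤ ‖x (2*m+2) - x (2*m)‖ :=
      hTne _ hmem2 _ (key m).1
    have hodd : ‖x (2*m+3) - x (2*m+1)‖
        ≤ (1 - α (m+1)) * ‖x (2*m+2) - x (2*m)‖ + |α (m+1) - α m| * (2*(N:ℝ)) := by
      rw [e1]
      calc ‖(1 - α (m+1)) • (T (x (2*m+2)) - T (x (2*m)))
            + (α (m+1) - α m) • (u - T (x (2*m)))‖
          ≤ ‖(1 - α (m+1)) • (T (x (2*m+2)) - T (x (2*m)))‖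
            + ‖(α (m+1) - α m) • (u - T (x (2*m)))‖ := norm_add_le _ _
        _ = (1 - α (m+1)) * ‖T (x (2*m+2)) - T (x (2*m))‖
            + |α (m+1) - α m| * ‖u - T (x (2*m))‖ := by
            rw [norm_smul, norm_smul, Real.norm_eq_abs, Real.norm_eq_abs,
              abs_of_nonneg (by linarith [(hα (m+1)).2])]
        _ ≤ (1 - α (m+1)) * ‖x (2*m+2) - x (2*m)‖ + |α (m+1) - α m| * (2*(N:ℝ)) := by
            have h1 : (1 - α (m+1)) * ‖T (x (2*m+2)) - T (x (2*m))‖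
                ≤ (1 - α (m+1)) * ‖x (2*m+2) - x (2*m)‖ :=
              mul_le_mul_of_nonneg_left hTd (by linarith [(hα (m+1)).2])
            have h2 : |α (m+1) - α m| * ‖u - T (x (2*m))‖
                ≤ |α (m+1) - α m| * (2*(N:ℝ)) :=
              mul_le_mul_of_nonneg_left huT (abs_nonneg _)
            linarith
    -- even difference bound
    have e2 : x (2*m+4) - x (2*m+2)
        = (1 - β (m+1)) • (U (x (2*m+3)) - U (x (2*m+1)))
          + β (m+1) • (x (2*m+3) - x (2*m+1))
          + (β m - β (m+1)) • (U (x (2*m+1)) - x (2*m+1)) := by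
      have v1 := hxeven (m+1)
      have v0 := hxeven m
      have i1 : 2*(m+1)+2 = 2*m+4 := by ring
      have i2 : 2*(m+1)+1 = 2*m+3 := by ring
      rw [i1, i2] at v1
      rw [v1, v0]; module
    have hUd : ‖U (x (2*m+3)) - U (x (2*m+1))‖ ≤ ‖x (2*m+3) - x (2*m+1)‖ := by
      have h3 : x (2*m+3) ∈ C := by
        have := (keyodd (m+1)).1; have i2 : 2*(m+1)+1 = 2*m+3 := by ring
        rwa [i2] at this
      exact hUne _ h3 _ (keyodd m).1
    have hUx : ‖U (x (2*m+1)) - x (2*m+1)‖ ≤ 2*(N:ℝ) := by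
      have hU : ‖U (x (2*m+1)) - p‖ ≤ (N:ℝ) := by
        calc ‖U (x (2*m+1)) - p‖ = ‖U (x (2*m+1)) - U p‖ := by rw [hUp]
          _ ≤ ‖x (2*m+1) - p‖ := hUne _ (keyodd m).1 _ hp
          _ ≤ (N:ℝ) := (keyodd m).2
      calc ‖U (x (2*m+1)) - x (2*m+1)‖
          = ‖(U (x (2*m+1)) - p) - (x (2*m+1) - p)‖ := by rw [sub_sub_sub_cancel_right]
        _ ≤ ‖U (x (2*m+1)) - p‖ + ‖x (2*m+1) - p‖ := norm_sub_le _ _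
        _ ≤ 2*(N:ℝ) := by linarith [(keyodd m).2]
    have heven : ‖x (2*m+4) - x (2*m+2)‖
        ≤ ‖x (2*m+3) - x (2*m+1)‖ + |β (m+1) - β m| * (2*(N:ℝ)) := by
      rw [e2]
      have step : ‖(1 - β (m+1)) • (U (x (2*m+3)) - U (x (2*m+1)))
            + β (m+1) • (x (2*m+3) - x (2*m+1))
            + (β m - β (m+1)) • (U (x (2*m+1)) - x (2*m+1))‖
          ≤ (1 - β (m+1)) * ‖U (x (2*m+3)) - U (x (2*m+1))‖
            + β (m+1) * ‖x (2*m+3) - x (2*m+1)‖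
            + |β m - β (m+1)| * ‖U (x (2*m+1)) - x (2*m+1)‖ := by
        refine le_trans (norm_add₃_le) ?_
        simp only [norm_smul, Real.norm_eq_abs]
        rw [abs_of_nonneg (show (0:ℝ) ≤ 1 - β (m+1) by linarith [(hβ (m+1)).2]),
          abs_of_nonneg (hβ (m+1)).1]
      refine le_trans step ?_
      have h1 : (1 - β (m+1)) * ‖U (x (2*m+3)) - U (x (2*m+1))‖
          ≤ (1 - β (m+1)) * ‖x (2*m+3) - x (2*m+1)‖ :=
        mul_le_mul_of_nonneg_left hUd (by linarith [(hβ (m+1)).2])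
      have h2 : |β m - β (m+1)| * ‖U (x (2*m+1)) - x (2*m+1)‖
          ≤ |β m - β (m+1)| * (2*(N:ℝ)) := mul_le_mul_of_nonneg_left hUx (abs_nonneg _)
      have h3 : |β m - β (m+1)| = |β (m+1) - β m| := abs_sub_comm _ _
      nlinarith [(hβ (m+1)).1, (hβ (m+1)).2, norm_nonneg (x (2*m+3) - x (2*m+1))]
    -- combine
    show ‖x (2*(m+1)+2) - x (2*(m+1))‖ ≤ (1 - α (m+1)) * ‖x (2*m+2) - x (2*m)‖
      + 2*(N:ℝ)*(|α (m+1) - α m| + |β (m+1) - β m|)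
    have i1 : 2*(m+1)+2 = 2*m+4 := by ring
    have i2 : 2*(m+1) = 2*m+2 := by ring
    rw [i1, i2]
    calc ‖x (2*m+4) - x (2*m+2)‖
        ≤ ‖x (2*m+3) - x (2*m+1)‖ + |β (m+1) - β m| * (2*(N:ℝ)) := heven
      _ ≤ (1 - α (m+1)) * ‖x (2*m+2) - x (2*m)‖ + |α (m+1) - α m| * (2*(N:ℝ))
          + |β (m+1) - β m| * (2*(N:ℝ)) := by linarith
      _ = (1 - α (m+1)) * ‖x (2*m+2) - x (2*m)‖
          + 2*(N:ℝ)*(|α (m+1) - α m| + |β (m+1) - β m|) := by ring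
  -- numerical setup
  set V : ℕ := Vrate Γ3 Γ4 N (ε/2) with hV_def
  set L : ℕ := ⌈Real.log (4*(N:ℝ)/ε)⌉₊ with hL_def
  set k : ℕ := V + L + 1 + 1 with hk_def
  have hn' : Γ2 k + 1 ≤ n := hn
  set δ : ℝ := (ε/2)/(4*(N:ℝ)) with hδ_def
  have hδpos : 0 < δ := by simp only [hδ_def]; positivity
  have hΓ3V : Γ3 δ ≤ V := le_max_left _ _
  have hΓ4V : Γ4 δ ≤ V := le_max_right _ _
  -- k ≤ Γ2 k + 1
  have hkle : k ≤ Γ2 k + 1 := by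
    have h1 : (k:ℝ) ≤ ∑ i ∈ Finset.range (Γ2 k + 1), α i := hΓ2 k
    have h2 : ∑ i ∈ Finset.range (Γ2 k + 1), α i ≤ (Γ2 k + 1 : ℕ) := by
      calc ∑ i ∈ Finset.range (Γ2 k + 1), α i ≤ ∑ i ∈ Finset.range (Γ2 k + 1), (1:ℝ) :=
            Finset.sum_le_sum (fun i _ => (hα i).2)
        _ = (Γ2 k + 1 : ℕ) := by simp
    have : (k:ℝ) ≤ (Γ2 k + 1 : ℕ) := le_trans h1 h2
    exact_mod_cast this
  have hV2n : V + 2 ≤ n := by omega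
  have hV1n : V + 1 ≤ n := by omega
  -- unroll
  have hmain := unroll w a c hwnn hcnn ha0 ha1 hrec (V+1) n hV1n
  -- bound w (V+1)
  have hwV : w (V+1) ≤ 2*(N:ℝ) := by
    show ‖x (2*(V+1)+2) - x (2*(V+1))‖ ≤ 2*(N:ℝ)
    have i1 : 2*(V+1)+2 = 2*(V+2) := by ring
    rw [i1]
    calc ‖x (2*(V+2)) - x (2*(V+1))‖
        = ‖(x (2*(V+2)) - p) - (x (2*(V+1)) - p)‖ := by rw [sub_sub_sub_cancel_right]
      _ ≤ ‖x (2*(V+2)) - p‖ + ‖x (2*(V+1)) - p‖ := norm_sub_le _ _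
      _ ≤ 2*(N:ℝ) := by linarith [(key (V+2)).2, (key (V+1)).2]
  -- bound the product
  have hsumα : (L:ℝ) ≤ ∑ i ∈ Finset.Icc (V+2) n, α i := by
    have hicc : Finset.Icc (V+2) n = Finset.Ico (V+2) (n+1) := by
      rw [Finset.Ico_add_one_right_eq_Icc]
    have hconsec : ∑ i ∈ Finset.Ico 0 (V+2), α i + ∑ i ∈ Finset.Ico (V+2) (n+1), α i
        = ∑ i ∈ Finset.Ico 0 (n+1), α i :=
      Finset.sum_Ico_consecutive α (Nat.zero_le _) (by omega)
    have hlow : (k:ℝ) ≤ ∑ i ∈ Finset.Ico 0 (n+1), α i := by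
      refine le_trans (hΓ2 k) ?_
      rw [← Finset.range_eq_Ico]
      exact Finset.sum_le_sum_of_subset_of_nonneg
        (Finset.range_subset_range.2 (by omega)) (fun i _ _ => (hα i).1)
    have hhigh : ∑ i ∈ Finset.Ico 0 (V+2), α i ≤ ((V:ℝ)+2) := by
      calc ∑ i ∈ Finset.Ico 0 (V+2), α i ≤ ∑ i ∈ Finset.Ico 0 (V+2), (1:ℝ) :=
            Finset.sum_le_sum (fun i _ => (hα i).2)
        _ = ((V:ℝ)+2) := by rw [Finset.sum_const, nsmul_eq_mul, mul_one, Nat.card_Ico, Nat.sub_zero]; push_cast; ring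
    have hkcast : (k:ℝ) = (V:ℝ) + (L:ℝ) + 2 := by simp only [hk_def]; push_cast; ring
    rw [hicc]
    linarith
  have hprodb : ∏ i ∈ Finset.Icc (V+2) n, a i ≤ ε/(4*(N:ℝ)) := by
    have h1 : ∏ i ∈ Finset.Icc (V+2) n, a i
        ≤ Real.exp (-(∑ i ∈ Finset.Icc (V+2) n, α i)) := by
      simp only [ha_def]
      exact prod_one_sub_le_exp α (fun i => (hα i).2) _
    have h2 : Real.exp (-(∑ i ∈ Finset.Icc (V+2) n, α i)) ≤ Real.exp (-(L:ℝ)) :=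
      Real.exp_le_exp.2 (by linarith)
    have h3 : Real.exp (-(L:ℝ)) ≤ Real.exp (-(Real.log (4*(N:ℝ)/ε))) :=
      Real.exp_le_exp.2 (by have := Nat.le_ceil (Real.log (4*(N:ℝ)/ε)); simp only [hL_def]; linarith)
    have h4 : Real.exp (-(Real.log (4*(N:ℝ)/ε))) = ε/(4*(N:ℝ)) := by
      rw [Real.exp_neg, Real.exp_log (by positivity)]
      field_simp
    linarith
  have hprodnn : 0 ≤ ∏ i ∈ Finset.Icc (V+2) n, a i := Finset.prod_nonneg fun i _ => ha0 i
  have hfirst : w (V+1) * ∏ i ∈ Finset.Icc (V+2) n, a i ≤ ε/2 := by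
    calc w (V+1) * ∏ i ∈ Finset.Icc (V+2) n, a i
        ≤ (2*(N:ℝ)) * (ε/(4*(N:ℝ))) :=
          mul_le_mul hwV hprodb hprodnn (by positivity)
      _ = ε/2 := by field_simp; ring
  -- bound the perturbation sum
  have hsumc : ∑ i ∈ Finset.Ico (V+1) n, c i ≤ ε/2 := by
    have hα_sub : ∑ i ∈ Finset.Ico (V+1) n, |α (i+1) - α i| ≤ δ := by
      refine le_trans (Finset.sum_le_sum_of_subset_of_nonneg ?_
        (fun i _ _ => abs_nonneg _)) (hΓ3 δ hδpos n)
      intro i hi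
      simp only [Finset.mem_Ico] at hi
      simp only [Finset.mem_Icc]
      omega
    have hβ_sub : ∑ i ∈ Finset.Ico (V+1) n, |β (i+1) - β i| ≤ δ := by
      refine le_trans (Finset.sum_le_sum_of_subset_of_nonneg ?_
        (fun i _ _ => abs_nonneg _)) (hΓ4 δ hδpos n)
      intro i hi
      simp only [Finset.mem_Ico] at hi
      simp only [Finset.mem_Icc]
      omega
    have hsplit : ∑ i ∈ Finset.Ico (V+1) n, c i
        = 2*(N:ℝ) * ((∑ i ∈ Finset.Ico (V+1) n, |α (i+1) - α i|)
          + ∑ i ∈ Finset.Ico (V+1) n, |β (i+1) - β i|) := by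
      simp only [hc_def, Finset.mul_sum, ← Finset.sum_add_distrib]
    rw [hsplit]
    have hδval : 2*(N:ℝ) * (δ + δ) = ε/2 := by
      simp only [hδ_def]; field_simp; ring
    have : 2*(N:ℝ) * ((∑ i ∈ Finset.Ico (V+1) n, |α (i+1) - α i|)
        + ∑ i ∈ Finset.Ico (V+1) n, |β (i+1) - β i|) ≤ 2*(N:ℝ) * (δ + δ) :=
      mul_le_mul_of_nonneg_left (by linarith) (by positivity)
    linarith
  -- finish
  show w n ≤ ε
  linarith
end

section
/- Let H be a real Hilbert space, C ⊆ H a nonempty convex subset, T, U : C → C nonexpansive maps with a common fixed point p, u, x₀ ∈ C, and (α_n) ⊂ [0,1], (β_n) ⊂ (0,1). Let (x_n) be the alternating Halpern–Mann iteration with anchor u and starting point x₀, and let N ∈ ℕ, N ≥ 1, satisfy N ≥ max{‖x₀ − p‖, ‖u − p‖}. Assume Γ1 : (0,∞) → ℕ is a rate of convergence for α_n → 0, Γ2 : ℕ → ℕ satisfies ∑_{i=0}^{Γ2(k)} α_i ≥ k for all k, Γ3 is a Cauchy rate for ∑|α_{n+1} − α_n|, Γ4 is a Cauchy rate for ∑|β_{n+1}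 − β_n|, and γ ∈ (0, 1/2] satisfies γ ≤ β_n ≤ 1 − γ for all n. Then for all ε > 0 and all n ≥ θ3(ε), both ‖U(x_{2n+1}) − x_{2n+1}‖ ≤ ε and ‖x_{2n+2} − x_{2n+1}‖ ≤ ε hold, where θ3(ε) := max{ θ1((γε)²/(8N)), Γ1((γε)²/(2N²)) }, θ1(ε) := A(V(ε/2) + ⌈ln(4N/ε)⌉ + 1) + 1, A(k) := Γ2(k+1), and V(ε) := max{ Γ3(ε/(4N)), Γ4(ε/(4N)) }. -/
/-- `θ3(ε) := max{θ1((γε)²/(8N)), Γ1((γε)²/(2N²))}`. -/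
noncomputable def theta3 (Γ1 : ℝ → ℕ) (Γ2 : ℕ → ℕ) (Γ3 Γ4 : ℝ → ℕ) (N : ℕ) (γ : ℝ)
    (ε : ℝ) : ℕ :=
  max (theta1 Γ2 Γ3 Γ4 N ((γ * ε) ^ 2 / (8 * (N : ℝ))))
    (Γ1 ((γ * ε) ^ 2 / (2 * (N : ℝ) ^ 2)))

private lemma combo_sq {H : Type*} [NormedAddCommGroup H] [InnerProductSpace ℝ H]
    (b : ℝ) (v w : H) :
    ‖(1 - b) • v + b • w‖ ^ 2
      = (1 - b) * ‖v‖ ^ 2 + b * ‖w‖ ^ 2 - b * (1 - b) * ‖v - w‖ ^ 2 := by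
  rw [norm_add_sq_real, norm_sub_sq_real, norm_smul, norm_smul, real_inner_smul_left,
    real_inner_smul_right, Real.norm_eq_abs, Real.norm_eq_abs, mul_pow, mul_pow, sq_abs, sq_abs]
  ring

set_option maxHeartbeats 2000000 in
/-- Rate of convergence `θ3` for `‖U(x_{2n+1}) - x_{2n+1}‖ → 0` and
`‖x_{2n+2} - x_{2n+1}‖ → 0` for the alternating Halpern–Mann iteration. -/
theorem stmt9 {H : Type*} [NormedAddCommGroup H] [InnerProductSpace ℝ H]
    (C : Set H) (hCne : C.Nonempty) (hCconv : Convex ℝ C)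
    (T U : H → H) (hTmaps : Set.MapsTo T C C) (hUmaps : Set.MapsTo U C C)
    (hTne : ∀ x ∈ C, ∀ y ∈ C, ‖T x - T y‖ ≤ ‖x - y‖)
    (hUne : ∀ x ∈ C, ∀ y ∈ C, ‖U x - U y‖ ≤ ‖x - y‖)
    (p : H) (hp : p ∈ C) (hTp : T p = p) (hUp : U p = p)
    (u x₀ : H) (hu : u ∈ C) (hx₀ : x₀ ∈ C)
    (α β : ℕ → ℝ)
    (hα : ∀ n, α n ∈ Set.Icc (0 : ℝ) 1) (hβ : ∀ n, β n ∈ Set.Ioo (0 : ℝ) 1)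
    (x : ℕ → H) (hx0 : x 0 = x₀)
    (hxodd : ∀ n, x (2 * n + 1) = (1 - α n) • T (x (2 * n)) + α n • u)
    (hxeven : ∀ n, x (2 * n + 2) = (1 - β n) • U (x (2 * n + 1)) + β n • x (2 * n + 1))
    (N : ℕ) (hN1 : 1 ≤ N)
    (hN : max ‖x₀ - p‖ ‖u - p‖ ≤ (N : ℝ))
    (Γ1 : ℝ → ℕ) (Γ2 : ℕ → ℕ) (Γ3 Γ4 : ℝ → ℕ)
    (hΓ1 : ∀ ε : ℝ, 0 < ε → ∀ n ≥ Γ1 ε, |α n| ≤ ε)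
    (hΓ2 : ∀ k : ℕ, (k : ℝ) ≤ ∑ i ∈ Finset.range (Γ2 k + 1), α i)
    (hΓ3 : ∀ ε : ℝ, 0 < ε → ∀ n : ℕ,
      ∑ i ∈ Finset.Icc (Γ3 ε + 1) (Γ3 ε + n), |α (i + 1) - α i| ≤ ε)
    (hΓ4 : ∀ ε : ℝ, 0 < ε → ∀ n : ℕ,
      ∑ i ∈ Finset.Icc (Γ4 ε + 1) (Γ4 ε + n), |β (i + 1) - β i| ≤ ε)
    (γ : ℝ) (hγ : γ ∈ Set.Ioc (0 : ℝ) (1 / 2))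
    (hγβ : ∀ n, γ ≤ β n ∧ β n ≤ 1 - γ) :
    ∀ ε : ℝ, 0 < ε → ∀ n ≥ theta3 Γ1 Γ2 Γ3 Γ4 N γ ε,
      ‖U (x (2 * n + 1)) - x (2 * n + 1)‖ ≤ ε ∧
        ‖x (2 * n + 2) - x (2 * n + 1)‖ ≤ ε := by
  have hNr1 : (1 : ℝ) ≤ (N : ℝ) := by exact_mod_cast hN1
  have hNr0 : (0 : ℝ) < (N : ℝ) := lt_of_lt_of_le one_pos hNr1
  have hup : ‖u - p‖ ≤ (N : ℝ) := le_trans (le_max_right _ _) hN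
  have hx0p : ‖x₀ - p‖ ≤ (N : ℝ) := le_trans (le_max_left _ _) hN
  have hγ0 : 0 < γ := hγ.1
  have hγh : γ ≤ 1 / 2 := hγ.2
  have hTbnd : ∀ y ∈ C, ‖T y - p‖ ≤ ‖y - p‖ := by
    intro y hy
    calc ‖T y - p‖ = ‖T y - T p‖ := by rw [hTp]
      _ ≤ ‖y - p‖ := hTne y hy p hp
  have hUbnd : ∀ y ∈ C, ‖U y - p‖ ≤ ‖y - p‖ := by
    intro y hy
    calc ‖U y - p‖ = ‖U y - U p‖ := by rw [hUp]
      _ ≤ ‖y - p‖ := hUne y hy p hp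
  -- membership
  have hmem : ∀ m, x (2 * m) ∈ C ∧ x (2 * m + 1) ∈ C := by
    intro m
    induction m with
    | zero =>
      have h0 : x 0 ∈ C := by rw [hx0]; exact hx₀
      refine ⟨h0, ?_⟩
      rw [hxodd 0]
      exact hCconv (hTmaps h0) hu (by linarith [(hα 0).1, (hα 0).2]) (hα 0).1 (by ring)
    | succ k ih =>
      have h2 : 2 * (k + 1) = 2 * k + 2 := by ring
      have hxe : x (2 * (k + 1)) ∈ C := by
        rw [h2, hxeven k]
        exact hCconv (hUmaps ih.2) ih.2 (by linarith [(hβ k).2]) (le_of_lt (hβ k).1) (by ring)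
      refine ⟨hxe, ?_⟩
      rw [hxodd (k + 1)]
      exact hCconv (hTmaps hxe) hu (by linarith [(hα (k + 1)).1, (hα (k + 1)).2])
        (hα (k + 1)).1 (by ring)
  -- convex combination minus point
  have hnormstep : ∀ (a : ℝ), 0 ≤ a → a ≤ 1 → ∀ v w z : H,
      ‖(1 - a) • v + a • w - z‖ ≤ (1 - a) * ‖v - z‖ + a * ‖w - z‖ := by
    intro a ha0 ha1 v w z
    have hid : (1 - a) • v + a • w - z = (1 - a) • (v - z) + a • (w - z) := by module
    rw [hid]
    calc ‖(1 - a) • (v - z) + a • (w - z)‖ ≤ ‖(1 - a) • (v - z)‖ + ‖a • (w - z)‖ :=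
        norm_add_le _ _
      _ = (1 - a) * ‖v - z‖ + a * ‖w - z‖ := by
        rw [norm_smul, norm_smul, Real.norm_eq_abs, Real.norm_eq_abs,
          abs_of_nonneg (by linarith), abs_of_nonneg ha0]
  -- a priori norm bounds
  have hbnd : ∀ m, ‖x (2 * m) - p‖ ≤ (N : ℝ) ∧ ‖x (2 * m + 1) - p‖ ≤ (N : ℝ) := by
    intro m
    induction m with
    | zero =>
      have h0 : ‖x 0 - p‖ ≤ (N : ℝ) := by rw [hx0]; exact hx0p
      refine ⟨h0, ?_⟩
      rw [hxodd 0]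
      calc ‖(1 - α 0) • T (x (2 * 0)) + α 0 • u - p‖
          ≤ (1 - α 0) * ‖T (x (2 * 0)) - p‖ + α 0 * ‖u - p‖ :=
            hnormstep _ (hα 0).1 (hα 0).2 _ _ _
        _ ≤ (1 - α 0) * (N : ℝ) + α 0 * (N : ℝ) := by
            have hT := (hTbnd _ (hmem 0).1).trans h0
            have := (hα 0).1; have := (hα 0).2
            gcongr <;> linarith
        _ = (N : ℝ) := by ring
    | succ k ih =>
      have h2 : 2 * (k + 1) = 2 * k + 2 := by ring
      have hxe : ‖x (2 * (k + 1)) - p‖ ≤ (N : ℝ) := by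
        rw [h2, hxeven k]
        have hb0 := (hβ k).1; have hb1 := (hβ k).2
        calc ‖(1 - β k) • U (x (2 * k + 1)) + β k • x (2 * k + 1) - p‖
            ≤ (1 - β k) * ‖U (x (2 * k + 1)) - p‖ + β k * ‖x (2 * k + 1) - p‖ :=
              hnormstep _ (by linarith) (by linarith) _ _ _
          _ ≤ (1 - β k) * (N : ℝ) + β k * (N : ℝ) := by
              have hU := (hUbnd _ (hmem k).2).trans ih.2
              gcongr <;> linarith [ih.2]
          _ = (N : ℝ) := by ring
      refine ⟨hxe, ?_⟩
      rw [hxodd (k + 1)]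
      have ha0 := (hα (k + 1)).1; have ha1 := (hα (k + 1)).2
      calc ‖(1 - α (k + 1)) • T (x (2 * (k + 1))) + α (k + 1) • u - p‖
          ≤ (1 - α (k + 1)) * ‖T (x (2 * (k + 1))) - p‖ + α (k + 1) * ‖u - p‖ :=
            hnormstep _ ha0 ha1 _ _ _
        _ ≤ (1 - α (k + 1)) * (N : ℝ) + α (k + 1) * (N : ℝ) := by
            have hT := (hTbnd _ (hmem (k + 1)).1).trans hxe
            gcongr <;> linarith
        _ = (N : ℝ) := by ring
  -- auxiliary 2N bounds
  have hsub2N : ∀ m k : ℕ, ‖x m - x k‖ ≤ ‖x m - p‖ + ‖x k - p‖ := by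
    intro m k
    have : x m - x k = (x m - p) - (x k - p) := by abel
    rw [this]; exact norm_sub_le _ _
  set e : ℕ → ℝ := fun m => ‖x (2 * m + 2) - x (2 * m)‖ with he
  have hE2N : ∀ m, e m ≤ 2 * (N : ℝ) := by
    intro m
    have h1 := (hbnd (m + 1)).1
    rw [show 2 * (m + 1) = 2 * m + 2 from by ring] at h1
    calc e m ≤ ‖x (2 * m + 2) - p‖ + ‖x (2 * m) - p‖ := hsub2N _ _
      _ ≤ 2 * (N : ℝ) := by linarith [(hbnd m).1]
  have hTu2N : ∀ m, ‖u - T (x (2 * m))‖ ≤ 2 * (N : ℝ) := by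
    intro m
    have h1 : u - T (x (2 * m)) = (u - p) - (T (x (2 * m)) - p) := by abel
    rw [h1]
    calc ‖(u - p) - (T (x (2 * m)) - p)‖ ≤ ‖u - p‖ + ‖T (x (2 * m)) - p‖ := norm_sub_le _ _
      _ ≤ 2 * (N : ℝ) := by linarith [(hTbnd _ (hmem m).1).trans (hbnd m).1]
  have hxU2N : ∀ m, ‖x (2 * m + 1) - U (x (2 * m + 1))‖ ≤ 2 * (N : ℝ) := by
    intro m
    have h1 : x (2 * m + 1) - U (x (2 * m + 1))
        = (x (2 * m + 1) - p) - (U (x (2 * m + 1)) - p) := by abel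
    rw [h1]
    calc ‖(x (2 * m + 1) - p) - (U (x (2 * m + 1)) - p)‖
        ≤ ‖x (2 * m + 1) - p‖ + ‖U (x (2 * m + 1)) - p‖ := norm_sub_le _ _
      _ ≤ 2 * (N : ℝ) := by linarith [(hbnd m).2, (hUbnd _ (hmem m).2).trans (hbnd m).2]
  -- the key recurrence
  have hrec : ∀ m, e (m + 1) ≤ (1 - α (m + 1)) * e m
      + (2 * (N : ℝ) * |α (m + 1) - α m| + 2 * (N : ℝ) * |β (m + 1) - β m|) := by
    intro m
    have o1 := hxodd (m + 1)
    rw [show 2 * (m + 1) + 1 = 2 * m + 3 from by ring,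
      show 2 * (m + 1) = 2 * m + 2 from by ring] at o1
    have o2 := hxodd m
    have ev1 := hxeven (m + 1)
    rw [show 2 * (m + 1) + 2 = 2 * m + 4 from by ring,
      show 2 * (m + 1) + 1 = 2 * m + 3 from by ring] at ev1
    have ev2 := hxeven m
    -- odd difference
    have hid1 : x (2 * m + 3) - x (2 * m + 1)
        = (1 - α (m + 1)) • (T (x (2 * m + 2)) - T (x (2 * m)))
          + (α (m + 1) - α m) • (u - T (x (2 * m))) := by
      rw [o1, o2]; module
    have hd : ‖x (2 * m + 3) - x (2 * m + 1)‖
        ≤ (1 - α (m + 1)) * e m + 2 * (N : ℝ) * |α (m + 1) - α m| := by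
      rw [hid1]
      have hTT : ‖T (x (2 * m + 2)) - T (x (2 * m))‖ ≤ e m := by
        have hm1 := (hmem (m + 1)).1
        rw [show 2 * (m + 1) = 2 * m + 2 from by ring] at hm1
        exact hTne _ hm1 _ (hmem m).1
      calc ‖(1 - α (m + 1)) • (T (x (2 * m + 2)) - T (x (2 * m)))
            + (α (m + 1) - α m) • (u - T (x (2 * m)))‖
          ≤ ‖(1 - α (m + 1)) • (T (x (2 * m + 2)) - T (x (2 * m)))‖
            + ‖(α (m + 1) - α m) • (u - T (x (2 * m)))‖ := norm_add_le _ _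
        _ = (1 - α (m + 1)) * ‖T (x (2 * m + 2)) - T (x (2 * m))‖
            + |α (m + 1) - α m| * ‖u - T (x (2 * m))‖ := by
            rw [norm_smul, norm_smul, Real.norm_eq_abs, Real.norm_eq_abs,
              abs_of_nonneg (by linarith [(hα (m + 1)).2])]
        _ ≤ (1 - α (m + 1)) * e m + |α (m + 1) - α m| * (2 * (N : ℝ)) := by
            gcongr
            · linarith [(hα (m + 1)).2]
            · exact hTu2N m
        _ = (1 - α (m + 1)) * e m + 2 * (N : ℝ) * |α (m + 1) - α m| := by ring
    -- even difference
    have hid2 : x (2 * m + 4) - x (2 * m + 2)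
        = (1 - β (m + 1)) • (U (x (2 * m + 3)) - U (x (2 * m + 1)))
          + β (m + 1) • (x (2 * m + 3) - x (2 * m + 1))
          + (β (m + 1) - β m) • (x (2 * m + 1) - U (x (2 * m + 1))) := by
      rw [ev1, ev2]; module
    have hmem3 : x (2 * m + 3) ∈ C := by
      have := (hmem (m + 1)).2
      rwa [show 2 * (m + 1) + 1 = 2 * m + 3 from by ring] at this
    have hUU : ‖U (x (2 * m + 3)) - U (x (2 * m + 1))‖ ≤ ‖x (2 * m + 3) - x (2 * m + 1)‖ :=
      hUne _ hmem3 _ (hmem m).2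
    have heval : e (m + 1) = ‖x (2 * m + 4) - x (2 * m + 2)‖ := by
      show ‖x (2 * (m + 1) + 2) - x (2 * (m + 1))‖ = _
      rw [show 2 * (m + 1) + 2 = 2 * m + 4 from by ring,
        show 2 * (m + 1) = 2 * m + 2 from by ring]
    have hb0 := (hβ (m + 1)).1; have hb1 := (hβ (m + 1)).2
    calc e (m + 1) = ‖x (2 * m + 4) - x (2 * m + 2)‖ := heval
      _ ≤ ‖(1 - β (m + 1)) • (U (x (2 * m + 3)) - U (x (2 * m + 1)))
            + β (m + 1) • (x (2 * m + 3) - x (2 * m + 1))‖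
          + ‖(β (m + 1) - β m) • (x (2 * m + 1) - U (x (2 * m + 1)))‖ := by
          rw [hid2]; exact norm_add_le _ _
      _ ≤ (1 - β (m + 1)) * ‖x (2 * m + 3) - x (2 * m + 1)‖
          + β (m + 1) * ‖x (2 * m + 3) - x (2 * m + 1)‖
          + |β (m + 1) - β m| * (2 * (N : ℝ)) := by
          gcongr ?_ + ?_
          · calc ‖(1 - β (m + 1)) • (U (x (2 * m + 3)) - U (x (2 * m + 1)))
                + β (m + 1) • (x (2 * m + 3) - x (2 * m + 1))‖
                ≤ ‖(1 - β (m + 1)) • (U (x (2 * m + 3)) - U (x (2 * m + 1)))‖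
                  + ‖β (m + 1) • (x (2 * m + 3) - x (2 * m + 1))‖ := norm_add_le _ _
              _ ≤ (1 - β (m + 1)) * ‖x (2 * m + 3) - x (2 * m + 1)‖
                  + β (m + 1) * ‖x (2 * m + 3) - x (2 * m + 1)‖ := by
                  rw [norm_smul, norm_smul, Real.norm_eq_abs, Real.norm_eq_abs,
                    abs_of_nonneg (by linarith), abs_of_nonneg (by linarith)]
                  nlinarith [hUU, hb1, norm_nonneg (U (x (2 * m + 3)) - U (x (2 * m + 1)))]
          · rw [norm_smul, Real.norm_eq_abs]
            gcongr
            exact hxU2N m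
      _ = ‖x (2 * m + 3) - x (2 * m + 1)‖ + 2 * (N : ℝ) * |β (m + 1) - β m| := by ring
      _ ≤ (1 - α (m + 1)) * e m + 2 * (N : ℝ) * |α (m + 1) - α m|
          + 2 * (N : ℝ) * |β (m + 1) - β m| := by linarith
      _ = (1 - α (m + 1)) * e m
          + (2 * (N : ℝ) * |α (m + 1) - α m| + 2 * (N : ℝ) * |β (m + 1) - β m|) := by ring
  -- unrolling
  have hunroll : ∀ (n₀ j : ℕ),
      e (n₀ + j) ≤ Real.exp (-(∑ i ∈ Finset.Ico n₀ (n₀ + j), α (i + 1))) * (2 * (N : ℝ))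
        + ∑ i ∈ Finset.Ico n₀ (n₀ + j),
            (2 * (N : ℝ) * |α (i + 1) - α i| + 2 * (N : ℝ) * |β (i + 1) - β i|) := by
    intro n₀ j
    induction j with
    | zero => simpa using hE2N n₀
    | succ j ih =>
      rw [show n₀ + (j + 1) = n₀ + j + 1 from by ring]
      have hr := hrec (n₀ + j)
      have hsumα : ∑ i ∈ Finset.Ico n₀ (n₀ + j + 1), α (i + 1)
          = (∑ i ∈ Finset.Ico n₀ (n₀ + j), α (i + 1)) + α (n₀ + j + 1) :=
        Finset.sum_Ico_succ_top (Nat.le_add_right n₀ j) _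
      have hsumc : ∑ i ∈ Finset.Ico n₀ (n₀ + j + 1),
            (2 * (N : ℝ) * |α (i + 1) - α i| + 2 * (N : ℝ) * |β (i + 1) - β i|)
          = (∑ i ∈ Finset.Ico n₀ (n₀ + j),
              (2 * (N : ℝ) * |α (i + 1) - α i| + 2 * (N : ℝ) * |β (i + 1) - β i|))
            + (2 * (N : ℝ) * |α (n₀ + j + 1) - α (n₀ + j)|
              + 2 * (N : ℝ) * |β (n₀ + j + 1) - β (n₀ + j)|) :=
        Finset.sum_Ico_succ_top (Nat.le_add_right n₀ j) _
      set S := ∑ i ∈ Finset.Ico n₀ (n₀ + j), α (i + 1) with hS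
      set Cs := ∑ i ∈ Finset.Ico n₀ (n₀ + j),
        (2 * (N : ℝ) * |α (i + 1) - α i| + 2 * (N : ℝ) * |β (i + 1) - β i|) with hCs
      have hCs0 : 0 ≤ Cs := by
        rw [hCs]
        apply Finset.sum_nonneg
        intro i _
        positivity
      have ha0 := (hα (n₀ + j + 1)).1
      have ha1 := (hα (n₀ + j + 1)).2
      have hexp0 : (0 : ℝ) ≤ Real.exp (-S) := (Real.exp_pos _).le
      have hexp1 : 1 - α (n₀ + j + 1) ≤ Real.exp (-(α (n₀ + j + 1))) := by
        have := Real.add_one_le_exp (-(α (n₀ + j + 1)))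
        linarith
      have he0 : 0 ≤ e (n₀ + j) := norm_nonneg _
      have step1 : e (n₀ + j + 1) ≤ (1 - α (n₀ + j + 1)) * (Real.exp (-S) * (2 * (N : ℝ)) + Cs)
          + (2 * (N : ℝ) * |α (n₀ + j + 1) - α (n₀ + j)|
            + 2 * (N : ℝ) * |β (n₀ + j + 1) - β (n₀ + j)|) := by
        have h1a : 0 ≤ 1 - α (n₀ + j + 1) := by linarith
        linarith [hr, mul_le_mul_of_nonneg_left ih h1a]
      have step2 : (1 - α (n₀ + j + 1)) * (Real.exp (-S) * (2 * (N : ℝ)) + Cs)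
          ≤ Real.exp (-(S + α (n₀ + j + 1))) * (2 * (N : ℝ)) + Cs := by
        have h2N : (0 : ℝ) ≤ 2 * (N : ℝ) := by positivity
        have hexpsplit : Real.exp (-(S + α (n₀ + j + 1)))
            = Real.exp (-(α (n₀ + j + 1))) * Real.exp (-S) := by
          rw [← Real.exp_add]; congr 1; ring
        rw [hexpsplit, mul_add]
        have t1 : (1 - α (n₀ + j + 1)) * (Real.exp (-S) * (2 * (N : ℝ)))
            ≤ Real.exp (-(α (n₀ + j + 1))) * Real.exp (-S) * (2 * (N : ℝ)) := by
          rw [mul_assoc]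
          exact mul_le_mul_of_nonneg_right hexp1 (mul_nonneg hexp0 h2N)
        have t2 : (1 - α (n₀ + j + 1)) * Cs ≤ Cs := mul_le_of_le_one_left hCs0 (by linarith)
        linarith
      rw [hsumα, hsumc]
      calc e (n₀ + j + 1) ≤ _ := step1
        _ ≤ Real.exp (-(S + α (n₀ + j + 1))) * (2 * (N : ℝ)) + Cs
            + (2 * (N : ℝ) * |α (n₀ + j + 1) - α (n₀ + j)|
              + 2 * (N : ℝ) * |β (n₀ + j + 1) - β (n₀ + j)|) := by linarith
        _ = _ := by ring_nf
  -- sums of α are at most the number of terms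
  have hsum_le_card : ∀ t : ℕ, ∑ i ∈ Finset.range t, α i ≤ (t : ℝ) := by
    intro t
    calc ∑ i ∈ Finset.range t, α i ≤ ∑ _i ∈ Finset.range t, (1 : ℝ) :=
        Finset.sum_le_sum (fun i _ => (hα i).2)
      _ = (t : ℝ) := by simp
  -- the rate for e
  have hERate : ∀ δ : ℝ, 0 < δ → ∀ m,
      Γ2 (Vrate Γ3 Γ4 N (δ / 2) + ⌈Real.log (4 * (N : ℝ) / δ)⌉₊ + 1 + 1) ≤ m → e m ≤ δ := by
    intro δ hδ m hm
    set V := Vrate Γ3 Γ4 N (δ / 2) with hV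
    set c := ⌈Real.log (4 * (N : ℝ) / δ)⌉₊ with hc
    set k := V + c + 1 + 1 with hk
    have hΓ2k : (k : ℝ) ≤ ∑ i ∈ Finset.range (Γ2 k + 1), α i := hΓ2 k
    have hΓ2k' : k ≤ Γ2 k + 1 := by
      have := (hΓ2k.trans (hsum_le_card (Γ2 k + 1)))
      exact_mod_cast this
    set n₀ := V + 1 with hn₀
    have hn₀m : n₀ ≤ m := by omega
    obtain ⟨j, hj⟩ : ∃ j, m = n₀ + j := ⟨m - n₀, by omega⟩
    have hun := hunroll n₀ j
    rw [← hj] at hun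
    -- the exponential part
    have hlogpos : (0 : ℝ) < 4 * (N : ℝ) / δ := by positivity
    have hS : Real.log (4 * (N : ℝ) / δ) ≤ ∑ i ∈ Finset.Ico n₀ m, α (i + 1) := by
      have hshift : ∑ i ∈ Finset.Ico n₀ m, α (i + 1)
          = ∑ i ∈ Finset.Ico (n₀ + 1) (m + 1), α i := by
        rw [Finset.sum_Ico_eq_sum_range, Finset.sum_Ico_eq_sum_range,
          show m + 1 - (n₀ + 1) = m - n₀ from by omega]
        apply Finset.sum_congr rfl
        intro i _
        congr 1
        omega
      rw [hshift, Finset.sum_Ico_eq_sub _ (by omega : n₀ + 1 ≤ m + 1)]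
      have h1 : (k : ℝ) ≤ ∑ i ∈ Finset.range (m + 1), α i := by
        refine hΓ2k.trans (Finset.sum_le_sum_of_subset_of_nonneg ?_ (fun i _ _ => (hα i).1))
        exact Finset.range_subset_range.2 (by omega)
      have h2 : ∑ i ∈ Finset.range (n₀ + 1), α i ≤ ((n₀ : ℝ) + 1) := by
        have := hsum_le_card (n₀ + 1); push_cast at this ⊢; linarith
      have hceil : Real.log (4 * (N : ℝ) / δ) ≤ (c : ℝ) := Nat.le_ceil _
      have hkcast : (k : ℝ) = (V : ℝ) + (c : ℝ) + 2 := by rw [hk]; push_cast; ring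
      have hncast : ((n₀ : ℕ) : ℝ) = (V : ℝ) + 1 := by rw [hn₀]; push_cast; ring
      rw [hkcast] at h1
      rw [hncast] at h2
      linarith
    have hSexp : Real.exp (-(∑ i ∈ Finset.Ico n₀ m, α (i + 1))) * (2 * (N : ℝ)) ≤ δ / 2 := by
      have hmono : Real.exp (-(∑ i ∈ Finset.Ico n₀ m, α (i + 1)))
          ≤ Real.exp (-(Real.log (4 * (N : ℝ) / δ))) := Real.exp_le_exp.2 (by linarith)
      have hval : Real.exp (-(Real.log (4 * (N : ℝ) / δ))) = δ / (4 * (N : ℝ)) := by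
        rw [Real.exp_neg, Real.exp_log hlogpos, inv_div]
      rw [hval] at hmono
      calc Real.exp (-(∑ i ∈ Finset.Ico n₀ m, α (i + 1))) * (2 * (N : ℝ))
          ≤ δ / (4 * (N : ℝ)) * (2 * (N : ℝ)) :=
            mul_le_mul_of_nonneg_right hmono (by positivity)
        _ = δ / 2 := by field_simp; ring
    -- the perturbation part
    have habs : ∑ i ∈ Finset.Ico n₀ m, |α (i + 1) - α i| ≤ δ / 2 / (4 * (N : ℝ)) := by
      set G := Γ3 (δ / 2 / (4 * (N : ℝ))) with hG
      have hGV : G ≤ V := by rw [hV]; exact le_max_left _ _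
      have hsubset : Finset.Ico n₀ m ⊆ Finset.Icc (G + 1) (G + (m - (G + 1))) := by
        intro i hi
        simp only [Finset.mem_Ico, Finset.mem_Icc] at hi ⊢
        omega
      refine (Finset.sum_le_sum_of_subset_of_nonneg hsubset (fun _ _ _ => abs_nonneg _)).trans ?_
      exact hΓ3 _ (by positivity) (m - (G + 1))
    have hbbs : ∑ i ∈ Finset.Ico n₀ m, |β (i + 1) - β i| ≤ δ / 2 / (4 * (N : ℝ)) := by
      set G := Γ4 (δ / 2 / (4 * (N : ℝ))) with hG
      have hGV : G ≤ V := by rw [hV]; exact le_max_right _ _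
      have hsubset : Finset.Ico n₀ m ⊆ Finset.Icc (G + 1) (G + (m - (G + 1))) := by
        intro i hi
        simp only [Finset.mem_Ico, Finset.mem_Icc] at hi ⊢
        omega
      refine (Finset.sum_le_sum_of_subset_of_nonneg hsubset (fun _ _ _ => abs_nonneg _)).trans ?_
      exact hΓ4 _ (by positivity) (m - (G + 1))
    have hCsplit : ∑ i ∈ Finset.Ico n₀ m,
          (2 * (N : ℝ) * |α (i + 1) - α i| + 2 * (N : ℝ) * |β (i + 1) - β i|)
        = 2 * (N : ℝ) * (∑ i ∈ Finset.Ico n₀ m, |α (i + 1) - α i|)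
          + 2 * (N : ℝ) * (∑ i ∈ Finset.Ico n₀ m, |β (i + 1) - β i|) := by
      rw [Finset.sum_add_distrib, Finset.mul_sum, Finset.mul_sum]
    have hCbound : ∑ i ∈ Finset.Ico n₀ m,
          (2 * (N : ℝ) * |α (i + 1) - α i| + 2 * (N : ℝ) * |β (i + 1) - β i|) ≤ δ / 2 := by
      rw [hCsplit]
      have hq : 2 * (N : ℝ) * (δ / 2 / (4 * (N : ℝ))) = δ / 4 := by field_simp
      have h1 := mul_le_mul_of_nonneg_left habs (by positivity : (0:ℝ) ≤ 2 * (N : ℝ))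
      have h2 := mul_le_mul_of_nonneg_left hbbs (by positivity : (0:ℝ) ≤ 2 * (N : ℝ))
      rw [hq] at h1 h2
      linarith
    linarith [hun, hSexp, hCbound]
  -- main part
  intro ε hε n hn
  have hth1 : theta1 Γ2 Γ3 Γ4 N ((γ * ε) ^ 2 / (8 * (N : ℝ))) ≤ n :=
    le_trans (le_max_left _ _) hn
  have hth2 : Γ1 ((γ * ε) ^ 2 / (2 * (N : ℝ) ^ 2)) ≤ n :=
    le_trans (le_max_right _ _) hn
  have hEn : e n ≤ (γ * ε) ^ 2 / (8 * (N : ℝ)) := by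
    apply hERate _ (by positivity) n
    simp only [theta1] at hth1
    omega
  have hαn : α n ≤ (γ * ε) ^ 2 / (2 * (N : ℝ) ^ 2) :=
    le_of_abs_le (hΓ1 _ (by positivity) n hth2)
  have hD0 : (0 : ℝ) ≤ ‖U (x (2 * n + 1)) - x (2 * n + 1)‖ := norm_nonneg _
  have hβ0 := (hβ n).1
  have hβ1 := (hβ n).2
  have hγβn := hγβ n
  have hDε : ‖U (x (2 * n + 1)) - x (2 * n + 1)‖ ≤ ε := by
    by_cases hcase : 2 * (N : ℝ) ≤ ε
    · rw [norm_sub_rev]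
      linarith [hxU2N n]
    · push_neg at hcase
      -- key Hilbert-space inequality
      have hid : x (2 * n + 2) - p
          = (1 - β n) • (U (x (2 * n + 1)) - p) + β n • (x (2 * n + 1) - p) := by
        rw [hxeven n]; module
      have hvw : (U (x (2 * n + 1)) - p) - (x (2 * n + 1) - p)
          = U (x (2 * n + 1)) - x (2 * n + 1) := by abel
      have hsq : ‖x (2 * n + 2) - p‖ ^ 2
          = (1 - β n) * ‖U (x (2 * n + 1)) - p‖ ^ 2 + β n * ‖x (2 * n + 1) - p‖ ^ 2
            - β n * (1 - β n) * ‖U (x (2 * n + 1)) - x (2 * n + 1)‖ ^ 2 := by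
        rw [hid, combo_sq, hvw]
      have hUo : ‖U (x (2 * n + 1)) - p‖ ≤ ‖x (2 * n + 1) - p‖ := hUbnd _ (hmem n).2
      have hββ : γ ^ 2 ≤ β n * (1 - β n) := by nlinarith only [hγβn.1, hγβn.2, hγ0]
      have hr0 : (0 : ℝ) ≤ ‖U (x (2 * n + 1)) - p‖ := norm_nonneg _
      have ho0 : (0 : ℝ) ≤ ‖x (2 * n + 1) - p‖ := norm_nonneg _
      have hkey : γ ^ 2 * ‖U (x (2 * n + 1)) - x (2 * n + 1)‖ ^ 2
          ≤ ‖x (2 * n + 1) - p‖ ^ 2 - ‖x (2 * n + 2) - p‖ ^ 2 := by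
        nlinarith only [hsq, hUo, sq_nonneg (‖U (x (2 * n + 1)) - x (2 * n + 1)‖), hββ, hβ0,
          hβ1, hr0, ho0,
          mul_nonneg (mul_nonneg (by linarith : (0:ℝ) ≤ 1 - β n)
            (by linarith : (0:ℝ) ≤ ‖x (2 * n + 1) - p‖ - ‖U (x (2 * n + 1)) - p‖))
            (by linarith : (0:ℝ) ≤ ‖x (2 * n + 1) - p‖ + ‖U (x (2 * n + 1)) - p‖),
          mul_le_mul_of_nonneg_right hββ
            (sq_nonneg (‖U (x (2 * n + 1)) - x (2 * n + 1)‖))]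
      -- odd step bound
      have hα0 := (hα n).1
      have hα1 := (hα n).2
      have hoddb : ‖x (2 * n + 1) - p‖ ≤ (1 - α n) * ‖x (2 * n) - p‖ + α n * (N : ℝ) := by
        rw [hxodd n]
        refine (hnormstep _ hα0 hα1 _ _ _).trans ?_
        have h1 := mul_le_mul_of_nonneg_left (hTbnd _ (hmem n).1)
          (by linarith : (0:ℝ) ≤ 1 - α n)
        have h2 := mul_le_mul_of_nonneg_left hup hα0
        linarith
      -- triangle inequality
      have htri : ‖x (2 * n) - p‖ ≤ e n + ‖x (2 * n + 2) - p‖ := by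
        have h1 : x (2 * n) - p = (x (2 * n) - x (2 * n + 2)) + (x (2 * n + 2) - p) := by abel
        have h2 : e n = ‖x (2 * n) - x (2 * n + 2)‖ := norm_sub_rev _ _
        rw [h1, h2]
        exact norm_add_le _ _
      have hqN : ‖x (2 * n + 2) - p‖ ≤ (N : ℝ) := by
        have := (hbnd (n + 1)).1
        rwa [show 2 * (n + 1) = 2 * n + 2 from by ring] at this
      have hbN : ‖x (2 * n) - p‖ ≤ (N : ℝ) := (hbnd n).1
      have hb0 : (0 : ℝ) ≤ ‖x (2 * n) - p‖ := norm_nonneg _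
      have hq0 : (0 : ℝ) ≤ ‖x (2 * n + 2) - p‖ := norm_nonneg _
      have hEn0 : (0 : ℝ) ≤ e n := norm_nonneg _
      have hs0 : (0 : ℝ) < (γ * ε) ^ 2 := by positivity
      have hsN : (γ * ε) ^ 2 ≤ (N : ℝ) ^ 2 := by
        have hh1 : γ * ε ≤ (N : ℝ) := by
          nlinarith only [mul_le_mul hγh hcase.le hε.le (by norm_num : (0:ℝ) ≤ 1/2)]
        nlinarith only [hh1, mul_pos hγ0 hε]
      have hN2 : (1 : ℝ) ≤ (N : ℝ) ^ 2 := by nlinarith only [hNr1]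
      have hEn' : 8 * (N : ℝ) * e n ≤ (γ * ε) ^ 2 := by
        rw [le_div_iff₀ (by positivity : (0:ℝ) < 8 * (N : ℝ))] at hEn
        linarith
      have hαn' : 2 * (N : ℝ) ^ 2 * α n ≤ (γ * ε) ^ 2 := by
        rw [le_div_iff₀ (by positivity : (0:ℝ) < 2 * (N : ℝ) ^ 2)] at hαn
        linarith
      have h1 : ‖x (2 * n + 1) - p‖ ^ 2
          ≤ ((1 - α n) * ‖x (2 * n) - p‖ + α n * (N : ℝ)) ^ 2 :=
        pow_le_pow_left₀ ho0 hoddb 2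
      have h3 : ‖x (2 * n) - p‖ ^ 2 ≤ (e n + ‖x (2 * n + 2) - p‖) ^ 2 :=
        pow_le_pow_left₀ hb0 htri 2
      have hA : 64 * (e n) ^ 2 ≤ (γ * ε) ^ 2 := by
        nlinarith only [mul_le_mul hEn' hEn'
            (mul_nonneg (by positivity : (0:ℝ) ≤ 8 * (N : ℝ)) hEn0) hs0.le,
          mul_le_mul_of_nonneg_left hsN hs0.le, hN2, hEn0]
      have hB : 8 * (e n * ‖x (2 * n + 2) - p‖) ≤ (γ * ε) ^ 2 := by
        nlinarith only [hEn', mul_nonneg hEn0 (sub_nonneg.2 hqN)]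
      have hC2 : 8 * (α n * (‖x (2 * n) - p‖ * ((N : ℝ) - ‖x (2 * n) - p‖)))
          ≤ (γ * ε) ^ 2 := by
        nlinarith only [hαn', mul_nonneg hα0 (sq_nonneg ((N : ℝ) - 2 * ‖x (2 * n) - p‖))]
      have hD2 : 4 * ((α n) ^ 2 * ((N : ℝ) - ‖x (2 * n) - p‖) ^ 2) ≤ (γ * ε) ^ 2 := by
        have hNb : ((N : ℝ) - ‖x (2 * n) - p‖) ^ 2 ≤ (N : ℝ) ^ 2 := by
          nlinarith only [mul_nonneg hb0 (sub_nonneg.2 hbN), mul_nonneg hNr0.le hb0]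
        have hq : 4 * (N : ℝ) ^ 2 * (α n) ^ 2 ≤ (γ * ε) ^ 2 := by
          nlinarith only [mul_le_mul hαn' hαn'
              (mul_nonneg (by positivity : (0:ℝ) ≤ 2 * (N : ℝ) ^ 2) hα0) hs0.le,
            mul_le_mul_of_nonneg_left hsN hs0.le, hN2]
        have hq2 : (α n) ^ 2 * ((N : ℝ) - ‖x (2 * n) - p‖) ^ 2 ≤ (α n) ^ 2 * (N : ℝ) ^ 2 :=
          mul_le_mul_of_nonneg_left hNb (by positivity : (0:ℝ) ≤ (α n) ^ 2)
        nlinarith only [hq, hq2]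
      have hfinal : γ ^ 2 * ‖U (x (2 * n + 1)) - x (2 * n + 1)‖ ^ 2 ≤ (γ * ε) ^ 2 := by
        nlinarith only [hkey, h1, h3, hA, hB, hC2, hD2]
      have hD2ε : ‖U (x (2 * n + 1)) - x (2 * n + 1)‖ ^ 2 ≤ ε ^ 2 := by
        have hγ2 : (0 : ℝ) < γ ^ 2 := by positivity
        have h4 : γ ^ 2 * ‖U (x (2 * n + 1)) - x (2 * n + 1)‖ ^ 2 ≤ γ ^ 2 * ε ^ 2 := by
          nlinarith only [hfinal]
        exact le_of_mul_le_mul_left h4 hγ2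
      nlinarith only [hD2ε, hD0, hε]
  refine ⟨hDε, ?_⟩
  have hid2 : x (2 * n + 2) - x (2 * n + 1)
      = (1 - β n) • (U (x (2 * n + 1)) - x (2 * n + 1)) := by
    rw [hxeven n]; module
  have hval : ‖x (2 * n + 2) - x (2 * n + 1)‖
      = (1 - β n) * ‖U (x (2 * n + 1)) - x (2 * n + 1)‖ := by
    rw [hid2, norm_smul, Real.norm_eq_abs, abs_of_nonneg (by linarith : (0:ℝ) ≤ 1 - β n)]
  rw [hval]
  nlinarith only [hD0, hβ0, hDε, hε]
end

section
/- Let H be a real Hilbert space, C ⊆ H a nonempty convex subset, T, U : C → C nonexpansive maps with a common fixed point p, u, x₀ ∈ C, and (α_n) ⊂ [0,1], (β_n) ⊂ (0,1). Let (x_n) be the alternating Halpern–Mann iteration with anchor u and starting point x₀, and let N ∈ ℕ, N ≥ 1, satisfy N ≥ max{‖x₀ − p‖, ‖u − p‖}. Assume Γ1 is a rate of convergence for α_n → 0, Γ2 : ℕ → ℕ satisfies ∑_{i=0}^{Γ2(k)} α_i ≥ k for all k, Γ3 is a Cauchy rate for ∑|α_{n+1} − α_n|, Γ4 is a Cauchy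 rate for ∑|β_{n+1} − β_n|, γ ∈ (0, 1/2] satisfies γ ≤ β_n ≤ 1 − γ for all n, the functions Γ1, Γ3, Γ4 are antitone (ε ≤ ε' implies Γ_i(ε) ≥ Γ_i(ε')), and Γ2 is monotone. Define θ1(ε) := A(V(ε/2) + ⌈ln(4N/ε)⌉ + 1) + 1 with A(k) := Γ2(k+1) and V(ε) := max{ Γ3(ε/(4N)), Γ4(ε/(4N)) }; θ3(ε) := max{ θ1((γε)²/(8N)), Γ1((γε)²/(2N²)) }; θ4(ε) := max{ θ1(ε/2), θ3(ε/2) }; ρ1(ε) := max{ 2θ3(ε) + 1, 2θ4(ε) }; ρ2(ε) := 2θ3(ε/3) + 2; ρ3(ε) := 2·max{ θ4(ε/6), Γ1(ε/(4N)) } + 1. Then for all ε > 0: ‖x_{n+1} − x_n‖ ≤ ε for all n ≥ ρ1(ε); ‖U(x_n) − x_n‖ ≤ ε for all n ≥ ρ2(ε); and ‖T(x_n) − x_n‖ ≤ ε for all n ≥ ρ3(ε). -/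
set_option maxHeartbeats 4000000

section AHMaux
variable {H : Type*} [NormedAddCommGroup H] [InnerProductSpace ℝ H]

lemma ahm_hilbert_id (v w : H) (t : ℝ) :
    ‖(1-t)•v + t•w‖^2 + t*(1-t)*‖v-w‖^2 = (1-t)*‖v‖^2 + t*‖w‖^2 := by
  have h1 : ‖(1-t)•v + t•w‖^2
      = ‖(1-t)•v‖^2 + 2*(inner ℝ ((1-t)•v) (t•w) : ℝ) + ‖t•w‖^2 := norm_add_sq_real _ _
  have h2 : ‖v - w‖^2 = ‖v‖^2 - 2*(inner ℝ v w : ℝ) + ‖w‖^2 := norm_sub_sq_real v w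
  have h3 : ‖(1-t)•v‖^2 = (1-t)^2*‖v‖^2 := by
    rw [norm_smul]; simp [mul_pow, sq_abs, Real.norm_eq_abs]
  have h3' : ‖t•w‖^2 = t^2*‖w‖^2 := by
    rw [norm_smul]; simp [mul_pow, sq_abs, Real.norm_eq_abs]
  have h4 : (inner ℝ ((1-t)•v) (t•w) : ℝ) = (1-t)*t*(inner ℝ v w : ℝ) := by
    rw [real_inner_smul_left, real_inner_smul_right]; ring
  rw [h1, h3, h3', h4]
  linear_combination (t*(1-t)) * h2

lemma ahm_comb (a b q : H) (t : ℝ) (ht0 : 0 ≤ t) (ht1 : t ≤ 1) :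
    ‖(1-t)•a + t•b - q‖ ≤ (1-t)*‖a-q‖ + t*‖b-q‖ := by
  have h : (1-t)•a + t•b - q = (1-t)•(a-q) + t•(b-q) := by module
  rw [h]
  calc ‖(1-t)•(a-q) + t•(b-q)‖ ≤ ‖(1-t)•(a-q)‖ + ‖t•(b-q)‖ := norm_add_le _ _
  _ = (1-t)*‖a-q‖ + t*‖b-q‖ := by
      rw [norm_smul, norm_smul, Real.norm_eq_abs, Real.norm_eq_abs,
        abs_of_nonneg (by linarith), abs_of_nonneg ht0]

end AHMaux


lemma ahm_claim3_arith (Nr γ ε' a b cc d A S αm βm : ℝ)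
    (hN1 : 1 ≤ Nr) (hγ0 : 0 < γ) (hγh : γ ≤ 1/2) (hε' : 0 < ε')
    (hβγ1 : γ ≤ βm) (hβγ2 : βm ≤ 1 - γ)
    (hid : b^2 + βm*(1-βm)*d^2 = (1-βm)*A^2 + βm*a^2)
    (hAa : A ≤ a) (hA0 : 0 ≤ A) (ha0 : 0 ≤ a) (hb0 : 0 ≤ b) (hcc0 : 0 ≤ cc)
    (hd0 : 0 ≤ d) (hS0 : 0 ≤ S) (haN : a ≤ Nr) (hbN : b ≤ Nr)
    (hα0 : 0 ≤ αm) (hα1 : αm ≤ 1)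
    (hcb : cc ≤ (1-αm)*b + αm*Nr) (hac : a ≤ S + cc)
    (hS : S ≤ (γ*ε')^2/(8*Nr)) (hαm : αm ≤ (γ*ε')^2/(2*Nr^2)) :
    d ≤ ε' := by
  have hN0 : (0:ℝ) < Nr := by linarith
  have hccN : cc ≤ Nr := by nlinarith
  have hba : b^2 + βm * (1 - βm) * d^2 ≤ a^2 := by
    have hA2 : A^2 ≤ a^2 := pow_le_pow_left₀ hA0 hAa 2
    nlinarith [mul_le_mul_of_nonneg_left hA2 (show (0:ℝ) ≤ 1 - βm by linarith)]
  have key2 : a^2 - cc^2 ≤ 2*Nr*S := by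
    have t1 : a^2 - cc^2 ≤ S*(a+cc) := by
      nlinarith [mul_nonneg (show (0:ℝ) ≤ S - (a - cc) by linarith)
        (show (0:ℝ) ≤ a + cc by linarith)]
    have t2 : S*(a+cc) ≤ S*(2*Nr) := mul_le_mul_of_nonneg_left (by linarith) hS0
    linarith
  have key3 : cc^2 - b^2 ≤ αm * Nr^2 := by
    have hc2 : cc^2 ≤ ((1-αm)*b + αm*Nr)^2 := by
      have hrhs : 0 ≤ (1-αm)*b + αm*Nr := by
        have := mul_nonneg (show (0:ℝ) ≤ 1 - αm by linarith) hb0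
        have := mul_nonneg hα0 (le_of_lt hN0)
        linarith
      nlinarith
    nlinarith [mul_nonneg (mul_nonneg hα0 (show (0:ℝ) ≤ 1 - αm by linarith))
      (sq_nonneg (Nr - b)), mul_nonneg hα0 (sq_nonneg b)]
  have hγβ' : γ/2 ≤ βm * (1 - βm) := by nlinarith
  have hchain : βm * (1 - βm) * d^2 ≤ 2*Nr*S + αm * Nr^2 := by linarith
  have h5 : γ/2*d^2 ≤ βm * (1 - βm) * d^2 := by
    nlinarith [mul_le_mul_of_nonneg_right hγβ' (sq_nonneg d)]
  have h6 : 2*Nr*S ≤ 2*Nr*((γ*ε')^2/(8*Nr)) :=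
    mul_le_mul_of_nonneg_left hS (by positivity)
  have h7 : αm*Nr^2 ≤ ((γ*ε')^2/(2*Nr^2))*Nr^2 := by
    have := mul_le_mul_of_nonneg_right hαm (show (0:ℝ) ≤ Nr^2 by positivity)
    linarith
  have hcalc : 2*Nr*((γ*ε')^2/(8*Nr)) + ((γ*ε')^2/(2*Nr^2))*Nr^2 = 3/4*(γ*ε')^2 := by
    field_simp; ring
  have hγ2 : γ^2 ≤ γ/2 := by nlinarith
  have hd2' : γ/2*d^2 ≤ γ/2*(3/4*ε'^2) := by
    have hstep : γ/2*d^2 ≤ 3/4*(γ*ε')^2 := by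
      have := mul_le_mul_of_nonneg_left hS (show (0:ℝ) ≤ 2*Nr by positivity)
      linarith
    nlinarith [mul_le_mul_of_nonneg_right hγ2 (sq_nonneg ε')]
  have hd2 : d^2 ≤ 3/4*ε'^2 :=
    (mul_le_mul_iff_right₀ (show (0:ℝ) < γ/2 by positivity)).1 hd2'
  nlinarith [sq_nonneg (d - ε'), sq_nonneg ε']




/-- `θ4(ε) := max{θ1(ε/2), θ3(ε/2)}`. -/
noncomputable def theta4 (Γ1 : ℝ → ℕ) (Γ2 : ℕ → ℕ) (Γ3 Γ4 : ℝ → ℕ) (N : ℕ) (γ : ℝ)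
    (ε : ℝ) : ℕ :=
  max (theta1 Γ2 Γ3 Γ4 N (ε / 2)) (theta3 Γ1 Γ2 Γ3 Γ4 N γ (ε / 2))

/-- `ρ1(ε) := max{2θ3(ε) + 1, 2θ4(ε)}`. -/
noncomputable def rho1 (Γ1 : ℝ → ℕ) (Γ2 : ℕ → ℕ) (Γ3 Γ4 : ℝ → ℕ) (N : ℕ) (γ : ℝ)
    (ε : ℝ) : ℕ :=
  max (2 * theta3 Γ1 Γ2 Γ3 Γ4 N γ ε + 1) (2 * theta4 Γ1 Γ2 Γ3 Γ4 N γ ε)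

/-- `ρ2(ε) := 2θ3(ε/3) + 2`. -/
noncomputable def rho2 (Γ1 : ℝ → ℕ) (Γ2 : ℕ → ℕ) (Γ3 Γ4 : ℝ → ℕ) (N : ℕ) (γ : ℝ)
    (ε : ℝ) : ℕ :=
  2 * theta3 Γ1 Γ2 Γ3 Γ4 N γ (ε / 3) + 2

/-- `ρ3(ε) := 2·max{θ4(ε/6), Γ1(ε/(4N))} + 1`. -/
noncomputable def rho3 (Γ1 : ℝ → ℕ) (Γ2 : ℕ → ℕ) (Γ3 Γ4 : ℝ → ℕ) (N : ℕ) (γ : ℝ)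
    (ε : ℝ) : ℕ :=
  2 * max (theta4 Γ1 Γ2 Γ3 Γ4 N γ (ε / 6)) (Γ1 (ε / (4 * (N : ℝ)))) + 1

/-- Rates of asymptotic regularity `ρ1`, `ρ2`, `ρ3` for the alternating
Halpern–Mann iteration in a Hilbert space. -/
theorem stmt10 {H : Type*} [NormedAddCommGroup H] [InnerProductSpace ℝ H]
    (C : Set H) (hCne : C.Nonempty) (hCconv : Convex ℝ C)
    (T U : H → H) (hTmaps : Set.MapsTo T C C) (hUmaps : Set.MapsTo U C C)
    (hTne : ∀ x ∈ C, ∀ y ∈ C, ‖T x - T y‖ ≤ ‖x - y‖)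
    (hUne : ∀ x ∈ C, ∀ y ∈ C, ‖U x - U y‖ ≤ ‖x - y‖)
    (p : H) (hp : p ∈ C) (hTp : T p = p) (hUp : U p = p)
    (u x₀ : H) (hu : u ∈ C) (hx₀ : x₀ ∈ C)
    (α β : ℕ → ℝ)
    (hα : ∀ n, α n ∈ Set.Icc (0 : ℝ) 1) (hβ : ∀ n, β n ∈ Set.Ioo (0 : ℝ) 1)
    (x : ℕ → H) (hx0 : x 0 = x₀)
    (hxodd : ∀ n, x (2 * n + 1) = (1 - α n) • T (x (2 * n)) + α n • u)
    (hxeven : ∀ n, x (2 * n + 2) = (1 - β n) • U (x (2 * n + 1)) + β n • x (2 * n + 1))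
    (N : ℕ) (hN1 : 1 ≤ N)
    (hN : max ‖x₀ - p‖ ‖u - p‖ ≤ (N : ℝ))
    (Γ1 : ℝ → ℕ) (Γ2 : ℕ → ℕ) (Γ3 Γ4 : ℝ → ℕ)
    (hΓ1 : ∀ ε : ℝ, 0 < ε → ∀ n ≥ Γ1 ε, |α n| ≤ ε)
    (hΓ2 : ∀ k : ℕ, (k : ℝ) ≤ ∑ i ∈ Finset.range (Γ2 k + 1), α i)
    (hΓ3 : ∀ ε : ℝ, 0 < ε → ∀ n : ℕ,
      ∑ i ∈ Finset.Icc (Γ3 ε + 1) (Γ3 ε + n), |α (i + 1) - α i| ≤ ε)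
    (hΓ4 : ∀ ε : ℝ, 0 < ε → ∀ n : ℕ,
      ∑ i ∈ Finset.Icc (Γ4 ε + 1) (Γ4 ε + n), |β (i + 1) - β i| ≤ ε)
    (γ : ℝ) (hγ : γ ∈ Set.Ioc (0 : ℝ) (1 / 2))
    (hγβ : ∀ n, γ ≤ β n ∧ β n ≤ 1 - γ)
    (hΓ1anti : ∀ ε ε' : ℝ, 0 < ε → ε ≤ ε' → Γ1 ε' ≤ Γ1 ε)
    (hΓ3anti : ∀ ε ε' : ℝ, 0 < ε → ε ≤ ε' → Γ3 ε' ≤ Γ3 ε)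
    (hΓ4anti : ∀ ε ε' : ℝ, 0 < ε → ε ≤ ε' → Γ4 ε' ≤ Γ4 ε)
    (hΓ2mono : Monotone Γ2) :
    ∀ ε : ℝ, 0 < ε →
      (∀ n ≥ rho1 Γ1 Γ2 Γ3 Γ4 N γ ε, ‖x (n + 1) - x n‖ ≤ ε) ∧
      (∀ n ≥ rho2 Γ1 Γ2 Γ3 Γ4 N γ ε, ‖U (x n) - x n‖ ≤ ε) ∧
      (∀ n ≥ rho3 Γ1 Γ2 Γ3 Γ4 N γ ε, ‖T (x n) - x n‖ ≤ ε) := by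
  obtain ⟨hγ0, hγh⟩ := hγ
  have hN0 : (0:ℝ) < N := by exact_mod_cast Nat.lt_of_lt_of_le Nat.zero_lt_one hN1
  have hNu : ‖u - p‖ ≤ (N:ℝ) := le_trans (le_max_right _ _) hN
  have hNx0 : ‖x₀ - p‖ ≤ (N:ℝ) := le_trans (le_max_left _ _) hN
  have hα0 : ∀ n, 0 ≤ α n := fun n => (hα n).1
  have hα1 : ∀ n, α n ≤ 1 := fun n => (hα n).2
  have hβ0 : ∀ n, 0 ≤ β n := fun n => le_of_lt (hβ n).1
  have hβ1 : ∀ n, β n ≤ 1 := fun n => le_of_lt (hβ n).2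
  have hTnp : ∀ a, a ∈ C → ‖T a - p‖ ≤ ‖a - p‖ := fun a ha => by
    have := hTne a ha p hp; rwa [hTp] at this
  have hUnp : ∀ a, a ∈ C → ‖U a - p‖ ≤ ‖a - p‖ := fun a ha => by
    have := hUne a ha p hp; rwa [hUp] at this
  have memC : ∀ (a b : H), a ∈ C → b ∈ C → ∀ t : ℝ, 0 ≤ t → t ≤ 1 → (1-t)•a + t•b ∈ C :=
    fun a b ha hb t h0 h1 => hCconv ha hb (by linarith) h0 (by ring)
  -- membership and boundedness of the iteration
  have key : ∀ n, (x (2*n) ∈ C ∧ ‖x (2*n) - p‖ ≤ (N:ℝ)) ∧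
      (x (2*n+1) ∈ C ∧ ‖x (2*n+1) - p‖ ≤ (N:ℝ)) := by
    intro n
    induction n with
    | zero =>
      have h0 : x (2*0) ∈ C ∧ ‖x (2*0) - p‖ ≤ (N:ℝ) := by
        rw [show 2*0 = 0 by ring, hx0]; exact ⟨hx₀, hNx0⟩
      refine ⟨h0, ?_⟩
      rw [hxodd 0]
      constructor
      · exact memC _ _ (hTmaps h0.1) hu _ (hα0 0) (hα1 0)
      · calc ‖(1 - α 0) • T (x (2*0)) + α 0 • u - p‖
            ≤ (1 - α 0)*‖T (x (2*0)) - p‖ + α 0 * ‖u - p‖ :=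
              ahm_comb _ _ _ _ (hα0 0) (hα1 0)
        _ ≤ (1 - α 0)*(N:ℝ) + α 0 * (N:ℝ) := by
            have h1 := hTnp _ h0.1
            have h2 := h0.2
            have := hα0 0; have := hα1 0
            nlinarith [hNu, norm_nonneg (T (x (2*0)) - p)]
        _ = (N:ℝ) := by ring
    | succ n ih =>
      have heven : x (2*(n+1)) ∈ C ∧ ‖x (2*(n+1)) - p‖ ≤ (N:ℝ) := by
        rw [show 2*(n+1) = 2*n+2 by ring, hxeven n]
        constructor
        · exact memC _ _ (hUmaps ih.2.1) ih.2.1 _ (hβ0 n) (hβ1 n)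
        · calc ‖(1 - β n) • U (x (2*n+1)) + β n • x (2*n+1) - p‖
              ≤ (1 - β n)*‖U (x (2*n+1)) - p‖ + β n * ‖x (2*n+1) - p‖ :=
                ahm_comb _ _ _ _ (hβ0 n) (hβ1 n)
          _ ≤ (1 - β n)*(N:ℝ) + β n * (N:ℝ) := by
              have h1 := le_trans (hUnp _ ih.2.1) ih.2.2
              have h2 := ih.2.2
              have := hβ0 n; have := hβ1 n
              nlinarith [norm_nonneg (U (x (2*n+1)) - p)]
          _ = (N:ℝ) := by ring
      refine ⟨heven, ?_⟩
      rw [hxodd (n+1)]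
      constructor
      · exact memC _ _ (hTmaps heven.1) hu _ (hα0 (n+1)) (hα1 (n+1))
      · calc ‖(1 - α (n+1)) • T (x (2*(n+1))) + α (n+1) • u - p‖
            ≤ (1 - α (n+1))*‖T (x (2*(n+1))) - p‖ + α (n+1) * ‖u - p‖ :=
              ahm_comb _ _ _ _ (hα0 (n+1)) (hα1 (n+1))
        _ ≤ (1 - α (n+1))*(N:ℝ) + α (n+1) * (N:ℝ) := by
            have h1 := le_trans (hTnp _ heven.1) heven.2
            have := hα0 (n+1); have := hα1 (n+1)
            nlinarith [hNu, norm_nonneg (T (x (2*(n+1))) - p)]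
        _ = (N:ℝ) := by ring
  have hxC : ∀ n, x n ∈ C := by
    intro n
    rcases Nat.even_or_odd n with ⟨m, hm⟩ | ⟨m, hm⟩
    · subst hm; rw [show m + m = 2*m by ring]; exact (key m).1.1
    · subst hm; exact (key m).2.1
  have hxb : ∀ n, ‖x n - p‖ ≤ (N:ℝ) := by
    intro n
    rcases Nat.even_or_odd n with ⟨m, hm⟩ | ⟨m, hm⟩
    · subst hm; rw [show m + m = 2*m by ring]; exact (key m).1.2
    · subst hm; exact (key m).2.2
  have hdiff : ∀ i j, ‖x i - x j‖ ≤ 2*(N:ℝ) := by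
    intro i j
    calc ‖x i - x j‖ = ‖(x i - p) - (x j - p)‖ := by rw [sub_sub_sub_cancel_right]
    _ ≤ ‖x i - p‖ + ‖x j - p‖ := norm_sub_le _ _
    _ ≤ 2*(N:ℝ) := by linarith [hxb i, hxb j]
  have hUxb : ∀ n, ‖U (x n) - x n‖ ≤ 2*(N:ℝ) := by
    intro n
    calc ‖U (x n) - x n‖ = ‖(U (x n) - p) - (x n - p)‖ := by rw [sub_sub_sub_cancel_right]
    _ ≤ ‖U (x n) - p‖ + ‖x n - p‖ := norm_sub_le _ _
    _ ≤ 2*(N:ℝ) := by linarith [le_trans (hUnp _ (hxC n)) (hxb n), hxb n]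
  have huT : ∀ n, ‖u - T (x n)‖ ≤ 2*(N:ℝ) := by
    intro n
    calc ‖u - T (x n)‖ = ‖(u - p) - (T (x n) - p)‖ := by rw [sub_sub_sub_cancel_right]
    _ ≤ ‖u - p‖ + ‖T (x n) - p‖ := norm_sub_le _ _
    _ ≤ 2*(N:ℝ) := by linarith [hNu, le_trans (hTnp _ (hxC n)) (hxb n)]
  -- recurrence for odd differences
  have R2' : ∀ m, ‖x (2*m+3) - x (2*m+1)‖
      ≤ (1 - α (m+1)) * ‖x (2*m+2) - x (2*m)‖ + 2*(N:ℝ)*|α (m+1) - α m| := by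
    intro m
    have h1 := hxodd m
    have h2 := hxodd (m+1)
    rw [show 2*(m+1)+1 = 2*m+3 by ring, show 2*(m+1) = 2*m+2 by ring] at h2
    have hid : x (2*m+3) - x (2*m+1)
        = (1 - α (m+1)) • (T (x (2*m+2)) - T (x (2*m)))
          + (α (m+1) - α m) • (u - T (x (2*m))) := by
      rw [h1, h2]; module
    rw [hid]
    calc ‖(1 - α (m+1)) • (T (x (2*m+2)) - T (x (2*m)))
          + (α (m+1) - α m) • (u - T (x (2*m)))‖
        ≤ ‖(1 - α (m+1)) • (T (x (2*m+2)) - T (x (2*m)))‖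
          + ‖(α (m+1) - α m) • (u - T (x (2*m)))‖ := norm_add_le _ _
    _ = (1 - α (m+1)) * ‖T (x (2*m+2)) - T (x (2*m))‖
          + |α (m+1) - α m| * ‖u - T (x (2*m))‖ := by
        rw [norm_smul, norm_smul, Real.norm_eq_abs, Real.norm_eq_abs,
          abs_of_nonneg (by linarith [hα1 (m+1)])]
    _ ≤ (1 - α (m+1)) * ‖x (2*m+2) - x (2*m)‖ + 2*(N:ℝ)*|α (m+1) - α m| := by
        have hT := hTne (x (2*m+2)) (hxC _) (x (2*m)) (hxC _)
        have h2N := huT (2*m)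
        have := hα1 (m+1)
        have := abs_nonneg (α (m+1) - α m)
        nlinarith [norm_nonneg (T (x (2*m+2)) - T (x (2*m)))]
  have R1' : ∀ m, ‖x (2*m+4) - x (2*m+2)‖
      ≤ ‖x (2*m+3) - x (2*m+1)‖ + 2*(N:ℝ)*|β (m+1) - β m| := by
    intro m
    have h1 := hxeven m
    have h2 := hxeven (m+1)
    rw [show 2*(m+1)+2 = 2*m+4 by ring, show 2*(m+1)+1 = 2*m+3 by ring] at h2
    have hid : x (2*m+4) - x (2*m+2)
        = (1 - β (m+1)) • (U (x (2*m+3)) - U (x (2*m+1)))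
          + β (m+1) • (x (2*m+3) - x (2*m+1))
          + (β m - β (m+1)) • (U (x (2*m+1)) - x (2*m+1)) := by
      rw [h1, h2]; module
    rw [hid]
    calc ‖(1 - β (m+1)) • (U (x (2*m+3)) - U (x (2*m+1)))
          + β (m+1) • (x (2*m+3) - x (2*m+1))
          + (β m - β (m+1)) • (U (x (2*m+1)) - x (2*m+1))‖
        ≤ ‖(1 - β (m+1)) • (U (x (2*m+3)) - U (x (2*m+1)))‖
          + ‖β (m+1) • (x (2*m+3) - x (2*m+1))‖
          + ‖(β m - β (m+1)) • (U (x (2*m+1)) - x (2*m+1))‖ := norm_add₃_le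
    _ = (1 - β (m+1)) * ‖U (x (2*m+3)) - U (x (2*m+1))‖
          + β (m+1) * ‖x (2*m+3) - x (2*m+1)‖
          + |β m - β (m+1)| * ‖U (x (2*m+1)) - x (2*m+1)‖ := by
        rw [norm_smul, norm_smul, norm_smul, Real.norm_eq_abs, Real.norm_eq_abs,
          Real.norm_eq_abs, abs_of_nonneg (by linarith [hβ1 (m+1)]),
          abs_of_nonneg (hβ0 (m+1))]
    _ ≤ ‖x (2*m+3) - x (2*m+1)‖ + 2*(N:ℝ)*|β (m+1) - β m| := by
        have hU := hUne (x (2*m+3)) (hxC _) (x (2*m+1)) (hxC _)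
        have h2N := hUxb (2*m+1)
        have := hβ0 (m+1); have := hβ1 (m+1)
        have habs : |β m - β (m+1)| = |β (m+1) - β m| := abs_sub_comm _ _
        rw [habs]
        have := abs_nonneg (β (m+1) - β m)
        nlinarith [norm_nonneg (U (x (2*m+3)) - U (x (2*m+1))),
          norm_nonneg (x (2*m+3) - x (2*m+1))]
  have recur : ∀ m, ‖x (2*m+4) - x (2*m+2)‖
      ≤ (1 - α (m+1)) * ‖x (2*m+2) - x (2*m)‖
        + 2*(N:ℝ)*(|α (m+1) - α m| + |β (m+1) - β m|) := by
    intro m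
    have h1 := R1' m; have h2 := R2' m
    linarith
  -- Xu-type unfolding
  have xu : ∀ b n : ℕ, ‖x (2*(b+n)+2) - x (2*(b+n))‖ ≤
      (∏ i ∈ Finset.Icc (b+1) (b+n), (1 - α i)) * (2*(N:ℝ)) +
      ∑ m ∈ Finset.Ico b (b+n), 2*(N:ℝ)*(|α (m+1) - α m| + |β (m+1) - β m|) := by
    intro b n
    induction n with
    | zero =>
      rw [Finset.Icc_eq_empty (by omega), Finset.prod_empty]
      simp only [Nat.add_zero, Finset.Ico_self, Finset.sum_empty, one_mul, add_zero]
      exact hdiff _ _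
    | succ n ih =>
      have hstep := recur (b+n)
      rw [show 2*(b+n)+4 = 2*(b+(n+1))+2 by ring, show 2*(b+n)+2 = 2*(b+(n+1)) by ring] at hstep
      have hprodnn : 0 ≤ ∏ i ∈ Finset.Icc (b+1) (b+n), (1 - α i) :=
        Finset.prod_nonneg (fun i _ => by linarith [hα1 i])
      have hsumnn : 0 ≤ ∑ m ∈ Finset.Ico b (b+n), 2*(N:ℝ)*(|α (m+1) - α m| + |β (m+1) - β m|) :=
        Finset.sum_nonneg (fun m _ => by positivity)
      have hprodsucc : ∏ i ∈ Finset.Icc (b+1) (b+(n+1)), (1 - α i)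
          = (∏ i ∈ Finset.Icc (b+1) (b+n), (1 - α i)) * (1 - α (b+n+1)) := by
        rw [show b+(n+1) = (b+n)+1 by ring]
        exact Finset.prod_Icc_succ_top (by omega) _
      have hsumsucc : ∑ m ∈ Finset.Ico b (b+(n+1)), 2*(N:ℝ)*(|α (m+1) - α m| + |β (m+1) - β m|)
          = (∑ m ∈ Finset.Ico b (b+n), 2*(N:ℝ)*(|α (m+1) - α m| + |β (m+1) - β m|))
            + 2*(N:ℝ)*(|α (b+n+1) - α (b+n)| + |β (b+n+1) - β (b+n)|) := by
        rw [show b+(n+1) = (b+n)+1 by ring]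
        exact Finset.sum_Ico_succ_top (by omega) _
      rw [hprodsucc, hsumsucc]
      have ha0 := hα0 (b+n+1); have ha1 := hα1 (b+n+1)
      have h2 : 2*(b+n)+2 = 2*(b+(n+1)) := by ring
      rw [h2] at ih
      nlinarith [ih, hstep, mul_le_mul_of_nonneg_left ih (show (0:ℝ) ≤ 1 - α (b+n+1) by linarith)]
  -- Cauchy-rate helper
  have cauchySum : ∀ (f : ℕ → ℝ) (G : ℕ) (δ : ℝ), (∀ i, 0 ≤ f i) →
      (∀ n : ℕ, ∑ i ∈ Finset.Icc (G+1) (G+n), f i ≤ δ) →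
      ∀ lo hi : ℕ, G + 1 ≤ lo → ∑ i ∈ Finset.Icc lo hi, f i ≤ δ := by
    intro f G δ hf hG lo hi hlo
    have hsub : Finset.Icc lo hi ⊆ Finset.Icc (G+1) (G + (hi - G)) := by
      intro i hi'
      simp only [Finset.mem_Icc] at *
      omega
    calc ∑ i ∈ Finset.Icc lo hi, f i
        ≤ ∑ i ∈ Finset.Icc (G+1) (G+(hi-G)), f i :=
          Finset.sum_le_sum_of_subset_of_nonneg hsub (fun i _ _ => hf i)
    _ ≤ δ := hG _
  -- Claim 1 : rate for the odd differences
  have claim1 : ∀ ε' : ℝ, 0 < ε' → ∀ j : ℕ, theta1 Γ2 Γ3 Γ4 N ε' ≤ j + 1 →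
      ‖x (2*j+3) - x (2*j+1)‖ ≤ ε' := by
    intro ε' hε' j hj
    set δ : ℝ := ε' / 2 / (4*(N:ℝ)) with hδdef
    have hδ : 0 < δ := by positivity
    set V : ℕ := Vrate Γ3 Γ4 N (ε'/2) with hVdef
    have hV3 : Γ3 δ ≤ V := le_max_left _ _
    have hV4 : Γ4 δ ≤ V := le_max_right _ _
    set K : ℕ := ⌈Real.log (4*(N:ℝ)/ε')⌉₊ with hKdef
    set G : ℕ := Γ2 (V + K + 1 + 1) with hGdef
    have hθ : theta1 Γ2 Γ3 Γ4 N ε' = G + 1 := rfl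
    have hjG : G ≤ j := by omega
    have hsum1 : ((V + K + 2 : ℕ) : ℝ) ≤ ∑ i ∈ Finset.range (G+1), α i := by
      have h := hΓ2 (V + K + 1 + 1)
      rw [show V + K + 1 + 1 = V + K + 2 by ring] at h
      exact h
    have hcard : ∀ s : Finset ℕ, ∑ i ∈ s, α i ≤ (s.card : ℝ) := by
      intro s
      calc ∑ i ∈ s, α i ≤ ∑ i ∈ s, (1:ℝ) := Finset.sum_le_sum (fun i _ => hα1 i)
      _ = (s.card : ℝ) := by simp
    have hGV : V + 1 ≤ G := by
      have h1 : ((V + K + 2 : ℕ) : ℝ) ≤ ((G + 1 : ℕ) : ℝ) := by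
        have := hcard (Finset.range (G+1))
        rw [Finset.card_range] at this
        exact le_trans hsum1 this
      have h2 : V + K + 2 ≤ G + 1 := by exact_mod_cast h1
      omega
    have hsplit : ∑ i ∈ Finset.range (G+1), α i
        = ∑ i ∈ Finset.Ico 0 (V+2), α i + ∑ i ∈ Finset.Ico (V+2) (G+1), α i := by
      rw [Finset.range_eq_Ico, ← Finset.sum_Ico_consecutive α (by omega : 0 ≤ V+2) (by omega : V+2 ≤ G+1)]
    have hlow : ((K:ℕ) : ℝ) ≤ ∑ i ∈ Finset.Ico (V+2) (G+1), α i := by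
      have h2 : ∑ i ∈ Finset.Ico 0 (V+2), α i ≤ ((V+2 : ℕ) : ℝ) := by
        have := hcard (Finset.Ico 0 (V+2))
        rwa [Nat.card_Ico, Nat.sub_zero] at this
      have h3 := hsum1
      rw [hsplit] at h3
      push_cast at h3 h2 ⊢
      linarith
    have hlow2 : ((K:ℕ) : ℝ) ≤ ∑ i ∈ Finset.Ico (V+2) (j+1), α i := by
      refine le_trans hlow (Finset.sum_le_sum_of_subset_of_nonneg
        (Finset.Ico_subset_Ico le_rfl (by omega)) (fun i _ _ => hα0 i))
    have hbn : (V+1) + (j - (V+1)) = j := by omega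
    have hxu := xu (V+1) (j - (V+1))
    rw [hbn, show (V+1)+1 = V+2 by ring] at hxu
    -- bound on the product
    have hSig : Real.log (4*(N:ℝ)/ε') ≤ ∑ i ∈ Finset.Icc (V+2) j, α i := by
      have hKle : Real.log (4*(N:ℝ)/ε') ≤ ((K:ℕ):ℝ) := Nat.le_ceil _
      have heq : Finset.Icc (V+2) j = Finset.Ico (V+2) (j+1) := by
        rw [Finset.Ico_add_one_right_eq_Icc]
      rw [heq]
      linarith [hlow2]
    have hprod : ∏ i ∈ Finset.Icc (V+2) j, (1 - α i) ≤ ε' / (4*(N:ℝ)) := by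
      calc ∏ i ∈ Finset.Icc (V+2) j, (1 - α i)
          ≤ ∏ i ∈ Finset.Icc (V+2) j, Real.exp (-α i) :=
            Finset.prod_le_prod (fun i _ => by linarith [hα1 i])
              (fun i _ => by nlinarith [Real.add_one_le_exp (-α i)])
      _ = Real.exp (∑ i ∈ Finset.Icc (V+2) j, (-α i)) := (Real.exp_sum _ _).symm
      _ = Real.exp (-(∑ i ∈ Finset.Icc (V+2) j, α i)) := by rw [Finset.sum_neg_distrib]
      _ ≤ Real.exp (-(Real.log (4*(N:ℝ)/ε'))) := Real.exp_le_exp.2 (by linarith)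
      _ = ε' / (4*(N:ℝ)) := by
          rw [Real.exp_neg, Real.exp_log (by positivity), inv_div]
    -- error sums
    have hAα : ∑ m ∈ Finset.Icc (V+1) j, |α (m+1) - α m| ≤ δ :=
      cauchySum _ (Γ3 δ) δ (fun i => abs_nonneg _) (hΓ3 δ hδ) (V+1) j (by omega)
    have hAβ : ∑ m ∈ Finset.Ico (V+1) j, |β (m+1) - β m| ≤ δ := by
      refine le_trans (Finset.sum_le_sum_of_subset_of_nonneg
        (Finset.Ico_subset_Icc_self) (fun i _ _ => abs_nonneg _)) ?_
      exact cauchySum _ (Γ4 δ) δ (fun i => abs_nonneg _) (hΓ4 δ hδ) (V+1) j (by omega)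
    have hAα' : ∑ m ∈ Finset.Ico (V+1) j, |α (m+1) - α m| + |α (j+1) - α j| ≤ δ := by
      have heq : ∑ m ∈ Finset.Ico (V+1) (j+1), |α (m+1) - α m|
          = ∑ m ∈ Finset.Ico (V+1) j, |α (m+1) - α m| + |α (j+1) - α j| :=
        Finset.sum_Ico_succ_top (by omega) _
      have heq2 : Finset.Icc (V+1) j = Finset.Ico (V+1) (j+1) := by rw [Finset.Ico_add_one_right_eq_Icc]
      rw [heq2, heq] at hAα
      exact hAα
    -- split the error sum in hxu
    have hsumsplit : ∑ m ∈ Finset.Ico (V+1) j, 2*(N:ℝ)*(|α (m+1) - α m| + |β (m+1) - β m|)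
        = 2*(N:ℝ) * (∑ m ∈ Finset.Ico (V+1) j, |α (m+1) - α m|)
          + 2*(N:ℝ) * (∑ m ∈ Finset.Ico (V+1) j, |β (m+1) - β m|) := by
      rw [Finset.mul_sum, Finset.mul_sum, ← Finset.sum_add_distrib]
      exact Finset.sum_congr rfl (fun i _ => by ring)
    -- final combination
    have hR2 := R2' j
    have hprodnn : 0 ≤ ∏ i ∈ Finset.Icc (V+2) j, (1 - α i) :=
      Finset.prod_nonneg (fun i _ => by linarith [hα1 i])
    have hTnn : 0 ≤ ‖x (2*j+2) - x (2*j)‖ := norm_nonneg _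
    have hTle : ‖x (2*j+2) - x (2*j)‖
        ≤ ε' / (4*(N:ℝ)) * (2*(N:ℝ)) + 2*(N:ℝ) * (∑ m ∈ Finset.Ico (V+1) j, |α (m+1) - α m|)
          + 2*(N:ℝ) * (∑ m ∈ Finset.Ico (V+1) j, |β (m+1) - β m|) := by
      rw [hsumsplit] at hxu
      nlinarith [mul_le_mul_of_nonneg_right hprod (show (0:ℝ) ≤ 2*(N:ℝ) by positivity)]
    have e1 : 2*(N:ℝ)*δ = ε'/4 := by
      rw [hδdef]; field_simp
    have e2 : ε'/(4*(N:ℝ))*(2*(N:ℝ)) = ε'/2 := by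
      field_simp; ring
    have hfinal : ‖x (2*j+3) - x (2*j+1)‖
        ≤ ‖x (2*j+2) - x (2*j)‖ + 2*(N:ℝ)*|α (j+1) - α j| := by
      have h1 := hα0 (j+1); have h2 := hα1 (j+1)
      nlinarith [hR2, hTnn]
    have hβnn : 0 ≤ ∑ m ∈ Finset.Ico (V+1) j, |β (m+1) - β m| :=
      Finset.sum_nonneg (fun i _ => abs_nonneg _)
    have hαnn : 0 ≤ ∑ m ∈ Finset.Ico (V+1) j, |α (m+1) - α m| :=
      Finset.sum_nonneg (fun i _ => abs_nonneg _)
    nlinarith [hfinal, hTle, hAα', hAβ, e1, e2,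
      mul_le_mul_of_nonneg_left hAβ (show (0:ℝ) ≤ 2*(N:ℝ) by positivity),
      mul_le_mul_of_nonneg_left hAα' (show (0:ℝ) ≤ 2*(N:ℝ) by positivity)]
  have hθ1ge1 : ∀ ε' : ℝ, 1 ≤ theta1 Γ2 Γ3 Γ4 N ε' := fun ε' =>
    Nat.le_add_left 1 _
  -- Claim 3 : rate for ‖U x_{2m+1} - x_{2m+1}‖
  have claim3 : ∀ ε' : ℝ, 0 < ε' → ∀ m : ℕ, theta3 Γ1 Γ2 Γ3 Γ4 N γ ε' ≤ m + 1 →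
      ‖U (x (2*m+1)) - x (2*m+1)‖ ≤ ε' := by
    intro ε' hε' m hm
    have hγε : 0 < (γ*ε')^2/(8*(N:ℝ)) := by positivity
    have h1 : theta1 Γ2 Γ3 Γ4 N ((γ*ε')^2/(8*(N:ℝ))) ≤ m + 1 :=
      le_trans (le_max_left _ _) hm
    have h2 : Γ1 ((γ*ε')^2/(2*(N:ℝ)^2)) ≤ m + 1 := le_trans (le_max_right _ _) hm
    have hS := claim1 _ hγε m h1
    have hα' : α (m+1) ≤ (γ*ε')^2/(2*(N:ℝ)^2) := by
      have := hΓ1 _ (by positivity) (m+1) h2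
      rwa [abs_of_nonneg (hα0 _)] at this
    have hid := ahm_hilbert_id (U (x (2*m+1)) - p) (x (2*m+1) - p) (β m)
    have hxe : x (2*m+2) - p = (1 - β m)•(U (x (2*m+1)) - p) + β m • (x (2*m+1) - p) := by
      rw [hxeven m]; module
    have hdvw : (U (x (2*m+1)) - p) - (x (2*m+1) - p) = U (x (2*m+1)) - x (2*m+1) := by abel
    rw [← hxe, hdvw] at hid
    set d := ‖U (x (2*m+1)) - x (2*m+1)‖ with hd
    set a := ‖x (2*m+1) - p‖ with ha
    set b := ‖x (2*m+2) - p‖ with hb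
    set cc := ‖x (2*m+3) - p‖ with hcc
    set A := ‖U (x (2*m+1)) - p‖ with hA
    set S := ‖x (2*m+3) - x (2*m+1)‖ with hSd
    have hAa : A ≤ a := hUnp _ (hxC _)
    have hcb : cc ≤ (1 - α (m+1))*b + α (m+1)*(N:ℝ) := by
      have h2' := hxodd (m+1)
      rw [show 2*(m+1)+1 = 2*m+3 by ring, show 2*(m+1) = 2*m+2 by ring] at h2'
      calc cc = ‖(1 - α (m+1)) • T (x (2*m+2)) + α (m+1) • u - p‖ := by rw [hcc, h2']
      _ ≤ (1-α (m+1))*‖T (x (2*m+2)) - p‖ + α (m+1)*‖u - p‖ :=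
          ahm_comb _ _ _ _ (hα0 _) (hα1 _)
      _ ≤ (1 - α (m+1))*b + α (m+1)*(N:ℝ) := by
          have hTb' : ‖T (x (2*m+2)) - p‖ ≤ b := hTnp _ (hxC _)
          have h0' := hα0 (m+1); have h1' := hα1 (m+1)
          nlinarith [hNu, norm_nonneg (T (x (2*m+2)) - p)]
    have hac : a ≤ S + cc := by
      calc a = ‖(x (2*m+1) - x (2*m+3)) + (x (2*m+3) - p)‖ := by rw [ha]; congr 1; abel
      _ ≤ ‖x (2*m+1) - x (2*m+3)‖ + cc := norm_add_le _ _
      _ = S + cc := by rw [norm_sub_rev]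
    exact ahm_claim3_arith (N:ℝ) γ ε' a b cc d A S (α (m+1)) (β m)
      (by exact_mod_cast hN1) hγ0 hγh hε' (hγβ m).1 (hγβ m).2 hid hAa
      (norm_nonneg _) (norm_nonneg _) (norm_nonneg _) (norm_nonneg _)
      (norm_nonneg _) (norm_nonneg _) (hxb _) (hxb _)
      (hα0 _) (hα1 _) hcb hac hS hα'
  -- Claim 4 : rate for ‖x_{2m+1} - x_{2m}‖
  have claim4 : ∀ ε' : ℝ, 0 < ε' → ∀ m : ℕ, theta4 Γ1 Γ2 Γ3 Γ4 N γ ε' ≤ m →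
      ‖x (2*m+1) - x (2*m)‖ ≤ ε' := by
    intro ε' hε' m hm
    have h1 : theta1 Γ2 Γ3 Γ4 N (ε'/2) ≤ m := le_trans (le_max_left _ _) hm
    have h3 : theta3 Γ1 Γ2 Γ3 Γ4 N γ (ε'/2) ≤ m := le_trans (le_max_right _ _) hm
    have hm1 : 1 ≤ m := le_trans (hθ1ge1 (ε'/2)) h1
    obtain ⟨j, rfl⟩ : ∃ j, m = j + 1 := ⟨m - 1, by omega⟩
    have hS := claim1 (ε'/2) (by positivity) j (by omega)
    have hU := claim3 (ε'/2) (by positivity) j (by omega)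
    rw [show 2*(j+1)+1 = 2*j+3 by ring, show 2*(j+1) = 2*j+2 by ring]
    have hxe : x (2*j+2) - x (2*j+1) = (1 - β j) • (U (x (2*j+1)) - x (2*j+1)) := by
      rw [hxeven j]; module
    have h2 : ‖x (2*j+1) - x (2*j+2)‖ ≤ ε'/2 := by
      rw [norm_sub_rev, hxe, norm_smul, Real.norm_eq_abs,
        abs_of_nonneg (by linarith [hβ1 j])]
      calc (1 - β j) * ‖U (x (2*j+1)) - x (2*j+1)‖
          ≤ 1 * ‖U (x (2*j+1)) - x (2*j+1)‖ :=
            mul_le_mul_of_nonneg_right (by linarith [hβ0 j]) (norm_nonneg _)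
      _ = ‖U (x (2*j+1)) - x (2*j+1)‖ := one_mul _
      _ ≤ ε'/2 := hU
    calc ‖x (2*j+3) - x (2*j+2)‖
        = ‖(x (2*j+3) - x (2*j+1)) + (x (2*j+1) - x (2*j+2))‖ := by congr 1; abel
    _ ≤ ‖x (2*j+3) - x (2*j+1)‖ + ‖x (2*j+1) - x (2*j+2)‖ := norm_add_le _ _
    _ ≤ ε'/2 + ε'/2 := by linarith [hS]
    _ = ε' := by ring
  -- final assembly
  intro ε hε
  refine ⟨?_, ?_, ?_⟩
  · -- ρ1
    intro n hn
    have hn' : max (2 * theta3 Γ1 Γ2 Γ3 Γ4 N γ ε + 1) (2 * theta4 Γ1 Γ2 Γ3 Γ4 N γ ε) ≤ n := hn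
    rcases Nat.even_or_odd n with ⟨m, hm⟩ | ⟨m, hm⟩
    · subst hm
      have hm4 : theta4 Γ1 Γ2 Γ3 Γ4 N γ ε ≤ m := by
        have := le_trans (le_max_right _ _) hn'; omega
      have := claim4 ε hε m hm4
      rw [show m + m + 1 = 2*m+1 by ring, show m + m = 2*m by ring]
      exact this
    · subst hm
      have hm3 : theta3 Γ1 Γ2 Γ3 Γ4 N γ ε ≤ m + 1 := by
        have := le_trans (le_max_left _ _) hn'; omega
      have hU := claim3 ε hε m hm3
      rw [show 2*m+1+1 = 2*m+2 by ring]
      have hxe : x (2*m+2) - x (2*m+1) = (1 - β m) • (U (x (2*m+1)) - x (2*m+1)) := by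
        rw [hxeven m]; module
      rw [hxe, norm_smul, Real.norm_eq_abs, abs_of_nonneg (by linarith [hβ1 m])]
      calc (1 - β m) * ‖U (x (2*m+1)) - x (2*m+1)‖
          ≤ 1 * ‖U (x (2*m+1)) - x (2*m+1)‖ :=
            mul_le_mul_of_nonneg_right (by linarith [hβ0 m]) (norm_nonneg _)
      _ = ‖U (x (2*m+1)) - x (2*m+1)‖ := one_mul _
      _ ≤ ε := hU
  · -- ρ2
    intro n hn
    have hn' : 2 * theta3 Γ1 Γ2 Γ3 Γ4 N γ (ε/3) + 2 ≤ n := hn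
    have hε3 : 0 < ε/3 := by linarith
    rcases Nat.even_or_odd n with ⟨m, hm⟩ | ⟨m, hm⟩
    · subst hm
      obtain ⟨j, rfl⟩ : ∃ j, m = j + 1 := ⟨m - 1, by omega⟩
      have hj : theta3 Γ1 Γ2 Γ3 Γ4 N γ (ε/3) ≤ j + 1 := by omega
      have hU := claim3 (ε/3) hε3 j hj
      rw [show j+1 + (j+1) = 2*j+2 by ring]
      have hxe : x (2*j+2) - x (2*j+1) = (1 - β j) • (U (x (2*j+1)) - x (2*j+1)) := by
        rw [hxeven j]; module
      have hd : ‖x (2*j+2) - x (2*j+1)‖ ≤ ε/3 := by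
        rw [hxe, norm_smul, Real.norm_eq_abs, abs_of_nonneg (by linarith [hβ1 j])]
        calc (1 - β j) * ‖U (x (2*j+1)) - x (2*j+1)‖
            ≤ 1 * ‖U (x (2*j+1)) - x (2*j+1)‖ :=
              mul_le_mul_of_nonneg_right (by linarith [hβ0 j]) (norm_nonneg _)
        _ = ‖U (x (2*j+1)) - x (2*j+1)‖ := one_mul _
        _ ≤ ε/3 := hU
      have hUne' := hUne (x (2*j+2)) (hxC _) (x (2*j+1)) (hxC _)
      calc ‖U (x (2*j+2)) - x (2*j+2)‖
          = ‖(U (x (2*j+2)) - U (x (2*j+1))) + (U (x (2*j+1)) - x (2*j+1))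
            + (x (2*j+1) - x (2*j+2))‖ := by congr 1; abel
      _ ≤ ‖U (x (2*j+2)) - U (x (2*j+1))‖ + ‖U (x (2*j+1)) - x (2*j+1)‖
            + ‖x (2*j+1) - x (2*j+2)‖ := norm_add₃_le
      _ ≤ ε/3 + ε/3 + ε/3 := by
          rw [norm_sub_rev (x (2*j+1))]
          have := le_trans hUne' hd
          linarith [hU, hd]
      _ = ε := by ring
    · subst hm
      have hj : theta3 Γ1 Γ2 Γ3 Γ4 N γ (ε/3) ≤ m + 1 := by omega
      have := claim3 (ε/3) hε3 m hj
      linarith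
  · -- ρ3
    intro n hn
    have hn' : 2 * max (theta4 Γ1 Γ2 Γ3 Γ4 N γ (ε/6)) (Γ1 (ε/(4*(N:ℝ)))) + 1 ≤ n := hn
    have hε4N : 0 < ε/(4*(N:ℝ)) := by positivity
    have hε6 : 0 < ε/6 := by linarith
    have hTxB : ∀ m, α m ≤ ε/(4*(N:ℝ)) → ‖T (x (2*m)) - x (2*m+1)‖ ≤ ε/2 := by
      intro m hαm
      have hxe : x (2*m+1) - T (x (2*m)) = α m • (u - T (x (2*m))) := by
        rw [hxodd m]; module
      rw [norm_sub_rev, hxe, norm_smul, Real.norm_eq_abs, abs_of_nonneg (hα0 m)]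
      calc α m * ‖u - T (x (2*m))‖ ≤ (ε/(4*(N:ℝ))) * (2*(N:ℝ)) :=
        mul_le_mul hαm (huT (2*m)) (norm_nonneg _) (le_of_lt hε4N)
      _ = ε/2 := by field_simp; ring
    rcases Nat.even_or_odd n with ⟨m, hm⟩ | ⟨m, hm⟩
    · subst hm
      have hm4 : theta4 Γ1 Γ2 Γ3 Γ4 N γ (ε/6) ≤ m := by
        have := le_max_left (theta4 Γ1 Γ2 Γ3 Γ4 N γ (ε/6)) (Γ1 (ε/(4*(N:ℝ)))); omega
      have hmΓ : Γ1 (ε/(4*(N:ℝ))) ≤ m := by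
        have := le_max_right (theta4 Γ1 Γ2 Γ3 Γ4 N γ (ε/6)) (Γ1 (ε/(4*(N:ℝ)))); omega
      rw [show m + m = 2*m by ring]
      have h4 := claim4 (ε/6) hε6 m hm4
      have hαm : α m ≤ ε/(4*(N:ℝ)) := by
        have := hΓ1 _ hε4N m hmΓ
        rwa [abs_of_nonneg (hα0 m)] at this
      have hT2 := hTxB m hαm
      calc ‖T (x (2*m)) - x (2*m)‖
          = ‖(T (x (2*m)) - x (2*m+1)) + (x (2*m+1) - x (2*m))‖ := by congr 1; abel
      _ ≤ ‖T (x (2*m)) - x (2*m+1)‖ + ‖x (2*m+1) - x (2*m)‖ := norm_add_le _ _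
      _ ≤ ε/2 + ε/6 := by linarith
      _ ≤ ε := by linarith
    · subst hm
      have hm4 : theta4 Γ1 Γ2 Γ3 Γ4 N γ (ε/6) ≤ m := by
        have := le_max_left (theta4 Γ1 Γ2 Γ3 Γ4 N γ (ε/6)) (Γ1 (ε/(4*(N:ℝ)))); omega
      have hmΓ : Γ1 (ε/(4*(N:ℝ))) ≤ m := by
        have := le_max_right (theta4 Γ1 Γ2 Γ3 Γ4 N γ (ε/6)) (Γ1 (ε/(4*(N:ℝ)))); omega
      have h4 := claim4 (ε/6) hε6 m hm4
      have hαm : α m ≤ ε/(4*(N:ℝ)) := by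
        have := hΓ1 _ hε4N m hmΓ
        rwa [abs_of_nonneg (hα0 m)] at this
      have hT2 := hTxB m hαm
      have hTne' := hTne (x (2*m+1)) (hxC _) (x (2*m)) (hxC _)
      calc ‖T (x (2*m+1)) - x (2*m+1)‖
          = ‖(T (x (2*m+1)) - T (x (2*m))) + (T (x (2*m)) - x (2*m+1))‖ := by congr 1; abel
      _ ≤ ‖T (x (2*m+1)) - T (x (2*m))‖ + ‖T (x (2*m)) - x (2*m+1)‖ := norm_add_le _ _
      _ ≤ ε/6 + ε/2 := by linarith [le_trans hTne' h4]
      _ ≤ ε := by linarith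
end

section
/- Let H be a real Hilbert space, x, y, u ∈ H, and b > 0 with b ≥ ‖x − y‖. For t ∈ [0,1] set w_t := (1 − t)·x + t·y. Then for every ε ∈ (0, b²]: if ‖u − x‖² ≤ ‖u − w_t‖² + ε²/b² for all t ∈ [0,1], then ⟨u − x, y − x⟩ ≤ ε. -/
open RealInnerProductSpace

/-- Hilbert-space quantitative projection characterization: if
`‖u - x‖² ≤ ‖u - w_t‖² + ε²/b²` for all `t ∈ [0,1]`, where
`w_t = (1 - t)x + ty`, then `⟪u - x, y - x⟫ ≤ ε`. -/
theorem stmt13 {H : Type*} [NormedAddCommGroup H] [InnerProductSpace ℝ H]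
    (x y u : H) (b : ℝ) (hb : 0 < b) (hxy : ‖x - y‖ ≤ b) :
    ∀ ε : ℝ, 0 < ε → ε ≤ b ^ 2 →
      (∀ t ∈ Set.Icc (0 : ℝ) 1,
        ‖u - x‖ ^ 2 ≤ ‖u - ((1 - t) • x + t • y)‖ ^ 2 + ε ^ 2 / b ^ 2) →
      ⟪u - x, y - x⟫ ≤ ε := by
  intro ε hε hεb h
  set t : ℝ := ε / b ^ 2 with ht
  have hb2 : (0:ℝ) < b ^ 2 := by positivity
  have ht0 : 0 < t := div_pos hε hb2
  have ht1 : t ≤ 1 := (div_le_one hb2).2 hεb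
  have key := h t ⟨ht0.le, ht1⟩
  have hw : u - ((1 - t) • x + t • y) = (u - x) - t • (y - x) := by
    simp only [smul_sub, sub_smul, one_smul]
    abel
  rw [hw] at key
  have expand : ‖(u - x) - t • (y - x)‖ ^ 2
      = ‖u - x‖ ^ 2 - 2 * t * ⟪u - x, y - x⟫ + t ^ 2 * ‖y - x‖ ^ 2 := by
    rw [norm_sub_sq_real, real_inner_smul_right, norm_smul]
    simp [mul_pow, abs_of_nonneg ht0.le]
    ring
  rw [expand] at key
  have hyx : ‖y - x‖ ≤ b := by rwa [← norm_neg, neg_sub]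
  have hyx2 : ‖y - x‖ ^ 2 ≤ b ^ 2 := by
    have := norm_nonneg (y - x); nlinarith
  -- key : ‖u-x‖² ≤ ‖u-x‖² - 2t⟪⟫ + t²‖y-x‖² + ε²/b²
  have h2 : 2 * t * ⟪u - x, y - x⟫ ≤ t ^ 2 * b ^ 2 + ε ^ 2 / b ^ 2 := by nlinarith
  have htb : t ^ 2 * b ^ 2 = ε ^ 2 / b ^ 2 := by
    rw [ht]; field_simp
  rw [htb] at h2
  have h3 : 2 * t * ⟪u - x, y - x⟫ ≤ 2 * t * ε := by
    have : 2 * t * ε = 2 * (ε ^ 2 / b ^ 2) := by rw [ht]; ring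
    linarith [h2, this.le]
  exact le_of_mul_le_mul_left (by linarith) (by positivity : (0:ℝ) < 2 * t)
end
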